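/- arXiv:2010.12845 — 7 statements merged into one kernel-verified Lean document; each statement's English description precedes it below -/
import Mathlib

section
/- Let D be a division ring and n a positive integer. The assignments V ↦ I_V and I ↦ V_I are mutually inverse bijections between the right D-vector subspaces of D^n and the right ideals of M_n(D); that is, for every right subspace V of D^n one has V_{I_V} = V, and for every right ideal I of M_n(D) one has I_{V_I} = I. -/
open MulOpposite

variable {D : Type*} [DivisionRing D] {n : ℕ}

/-- The right ideal of matrices all of whose columns lie in the right subspace `V`. -/
def colIdeal (V : Submodule Dᵐᵒᵖ (Fin n → D)) :
    Submodule (Matrix (Fin n) (Fin n) D)ᵐᵒᵖ (Matrix (Fin n) (Fin n) D) where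
  carrier := {M | ∀ j, (fun i => M i j) ∈ V}
  add_mem' := by
    intro M N hM hN j
    have : (fun i => (M + N) i j) = (fun i => M i j) + fun i => N i j := by
      funext i; simp [Matrix.add_apply]
    rw [this]
    exact V.add_mem (hM j) (hN j)
  zero_mem' := by
    intro j
    have : (fun i => (0 : Matrix (Fin n) (Fin n) D) i j) = (0 : Fin n → D) := by
      funext i; simp
    rw [this]; exact V.zero_mem
  smul_mem' := by
    intro N M hM j
    have h : (fun i => (op N.unop • M) i j)
        = ∑ k, op (N.unop k j) • fun i => M i k := by
      funext i
      simp [MulOpposite.smul_eq_mul_unop, Matrix.mul_apply, Finset.sum_apply]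
    have : op N.unop • M = N • M := by simp
    rw [← this, h]
    exact Submodule.sum_mem V fun k _ => V.smul_mem _ (hM k)

/-- The right subspace of `D^n` spanned by the columns of elements of a right ideal `I`. -/
def colSpan (I : Submodule (Matrix (Fin n) (Fin n) D)ᵐᵒᵖ (Matrix (Fin n) (Fin n) D)) :
    Submodule Dᵐᵒᵖ (Fin n → D) :=
  Submodule.span Dᵐᵒᵖ {v | ∃ M ∈ I, ∃ j : Fin n, v = fun i => M i j}

/-- The matrix whose `j`-th column is `v` and other columns are zero. -/
def colMat (v : Fin n → D) (j : Fin n) : Matrix (Fin n) (Fin n) D :=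
  Matrix.of fun i k => if k = j then v i else 0

lemma colMat_mem {I : Submodule (Matrix (Fin n) (Fin n) D)ᵐᵒᵖ (Matrix (Fin n) (Fin n) D)}
    {v : Fin n → D} (hv : v ∈ colSpan I) (j : Fin n) : colMat v j ∈ I := by
  induction hv using Submodule.span_induction with
  | mem x hx =>
      obtain ⟨M, hM, j₀, rfl⟩ := hx
      have h : colMat (fun i => M i j₀) j = op (Matrix.single j₀ j (1:D)) • M := by
        rw [MulOpposite.smul_eq_mul_unop]
        ext i k
        simp [colMat, Matrix.mul_apply, Matrix.single, mul_ite, ite_and,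
          eq_comm (a := k) (b := j)]
      rw [h]
      exact I.smul_mem _ hM
  | zero =>
      have : colMat (0 : Fin n → D) j = 0 := by ext i k; simp [colMat]
      rw [this]; exact I.zero_mem
  | add x y _ _ hx hy =>
      have : colMat (x + y) j = colMat x j + colMat y j := by
        ext i k; simp [colMat]; split <;> simp
      rw [this]; exact I.add_mem hx hy
  | smul c x _ hx =>
      have h : colMat (c • x) j = op (Matrix.single j j c.unop) • colMat x j := by
        rw [MulOpposite.smul_eq_mul_unop]
        ext i k
        simp [colMat, Matrix.mul_apply, Matrix.single, mul_ite, ite_and,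
          eq_comm (a := k) (b := j), MulOpposite.smul_eq_mul_unop]
      rw [h]
      exact I.smul_mem _ hx

/-- For a division ring `D` and `n ≥ 1`, the assignments `V ↦ I_V` and
`I ↦ V_I` are mutually inverse bijections between right subspaces of `D^n` and right
ideals of `M_n(D)`. -/
theorem colSpan_colIdeal_and_colIdeal_colSpan
    {D : Type*} [DivisionRing D] {n : ℕ} (hn : 1 ≤ n) :
    (∀ V : Submodule Dᵐᵒᵖ (Fin n → D), colSpan (colIdeal V) = V) ∧
    (∀ I : Submodule (Matrix (Fin n) (Fin n) D)ᵐᵒᵖ (Matrix (Fin n) (Fin n) D),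
      colIdeal (colSpan I) = I) := by
  constructor
  · intro V
    apply le_antisymm
    · rw [colSpan, Submodule.span_le]
      rintro v ⟨M, hM, j, rfl⟩
      exact hM j
    · intro v hv
      apply Submodule.subset_span
      refine ⟨colMat v ⟨0, hn⟩, ?_, ⟨0, hn⟩, ?_⟩
      · intro k
        by_cases h : k = ⟨0, hn⟩
        · have : (fun i => colMat v ⟨0, hn⟩ i k) = v := by funext i; simp [colMat, h]
          rw [this]; exact hv
        · have : (fun i => colMat v ⟨0, hn⟩ i k) = (0 : Fin n → D) := by
            funext i; simp [colMat, h]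
          rw [this]; exact V.zero_mem
      · funext i; simp [colMat]
  · intro I
    apply le_antisymm
    · intro M hM
      have h : M = ∑ j, colMat (fun i => M i j) j := by
        ext i k
        simp [colMat, Matrix.sum_apply]
      rw [h]
      exact I.sum_mem fun j _ => colMat_mem (hM j) j
    · intro M hM j
      exact Submodule.subset_span ⟨M, hM, j, rfl⟩
end

section
/- Let D be a division ring, n a positive integer, and I a right ideal of M_n(D). Then there exists an idempotent element φ ∈ I (φ² = φ) such that I is the right ideal generated by φ, i.e. I = φ·M_n(D), and such that V_I equals the image of φ, i.e. V_I is the right subspace of D^n spanned by the columns of φ. -/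
open MulOpposite

variable {D : Type*} [DivisionRing D] {n : ℕ}

def singleCol (j : Fin n) (v : Fin n → D) : Matrix (Fin n) (Fin n) D :=
  Matrix.of fun i l => if l = j then v i else 0

lemma singleCol_col (j k : Fin n) (M : Matrix (Fin n) (Fin n) D) :
    singleCol j (fun i => M i k) = M * Matrix.single k j 1 := by
  funext i l
  rw [Matrix.mul_apply]
  simp only [singleCol, Matrix.of_apply, Matrix.single, mul_ite, mul_one, mul_zero,
    ite_and]
  rcases eq_or_ne l j with h | h
  · subst h; simp [Finset.sum_ite_eq]
  · simp only [if_neg h, Finset.sum_ite_eq, Finset.mem_univ, if_true]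
    exact (if_neg fun h' => h h'.symm).symm

lemma singleCol_mem {I : Submodule (Matrix (Fin n) (Fin n) D)ᵐᵒᵖ (Matrix (Fin n) (Fin n) D)}
    (j : Fin n) {v : Fin n → D} (hv : v ∈ colSpan I) : singleCol j v ∈ I := by
  let S : Submodule Dᵐᵒᵖ (Fin n → D) :=
    { carrier := {v | singleCol j v ∈ I}
      add_mem' := by
        intro a b ha hb
        show singleCol j (a + b) ∈ I
        have : singleCol j (a + b) = singleCol j a + singleCol j b := by
          funext i l; by_cases h : l = j <;> simp [singleCol, h]
        rw [this]; exact I.add_mem ha hb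
      zero_mem' := by
        show singleCol j (0 : Fin n → D) ∈ I
        have : singleCol j (0 : Fin n → D) = 0 := by
          funext i l; simp [singleCol]
        rw [this]; exact I.zero_mem
      smul_mem' := by
        intro c v hv
        show singleCol j (c • v) ∈ I
        have : singleCol j (c • v) = op (Matrix.diagonal fun _ : Fin n => c.unop) • singleCol j v := by
          rw [MulOpposite.smul_eq_mul_unop, unop_op]
          funext i l
          by_cases h : l = j <;>
            simp [singleCol, Matrix.mul_diagonal, MulOpposite.smul_eq_mul_unop, h]
        rw [this]; exact I.smul_mem _ hv }
  have hle : colSpan I ≤ S := by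
    rw [colSpan, Submodule.span_le]
    rintro v ⟨M, hM, k, rfl⟩
    show singleCol j (fun i => M i k) ∈ I
    rw [singleCol_col, ← unop_op (Matrix.single k j 1),
      ← MulOpposite.smul_eq_mul_unop]
    exact I.smul_mem _ hM
  exact hle hv

lemma mem_of_cols {I : Submodule (Matrix (Fin n) (Fin n) D)ᵐᵒᵖ (Matrix (Fin n) (Fin n) D)}
    {M : Matrix (Fin n) (Fin n) D} (h : ∀ j, (fun i => M i j) ∈ colSpan I) : M ∈ I := by
  have hM : M = ∑ j, singleCol j (fun i => M i j) := by
    funext i l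
    simp [singleCol, Matrix.sum_apply]
  rw [hM]
  exact Submodule.sum_mem I fun j _ => singleCol_mem j (h j)

lemma e_decomp (v : Fin n → D) : v = ∑ k, op (v k) • Pi.single k (1 : D) := by
  funext i
  simp [Finset.sum_apply, MulOpposite.smul_eq_mul_unop, Pi.single_apply, ite_mul]

lemma col_mul (A B : Matrix (Fin n) (Fin n) D) (j : Fin n) :
    (fun i => (A * B) i j) = ∑ k, op (B k j) • (fun i => A i k) := by
  funext i
  simp [Matrix.mul_apply, Finset.sum_apply, MulOpposite.smul_eq_mul_unop]

/-- Every right ideal `I` of `M_n(D)` is generated by an idempotent `φ ∈ I`,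
and `V_I` is the image of `φ`, i.e. the right subspace spanned by the columns of `φ`. -/
theorem exists_idempotent_generator
    {D : Type*} [DivisionRing D] {n : ℕ} (hn : 1 ≤ n)
    (I : Submodule (Matrix (Fin n) (Fin n) D)ᵐᵒᵖ (Matrix (Fin n) (Fin n) D)) :
    ∃ φ ∈ I, φ * φ = φ ∧
      (I : Set (Matrix (Fin n) (Fin n) D)) = Set.range (fun M => φ * M) ∧
      colSpan I = Submodule.span Dᵐᵒᵖ (Set.range fun j : Fin n => fun i => φ i j) := by
  obtain ⟨W, hW⟩ := Submodule.exists_isCompl (colSpan I)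
  let p : (Fin n → D) →ₗ[Dᵐᵒᵖ] (Fin n → D) :=
    (colSpan I).subtype ∘ₗ (colSpan I).linearProjOfIsCompl W hW
  have hpV : ∀ x, p x ∈ colSpan I := fun x => ((colSpan I).linearProjOfIsCompl W hW x).2
  have hpid : ∀ x ∈ colSpan I, p x = x := fun x hx =>
    congrArg Subtype.val (Submodule.linearProjOfIsCompl_apply_left hW ⟨x, hx⟩)
  set φ : Matrix (Fin n) (Fin n) D := Matrix.of fun i j => p (Pi.single j 1) i with hφ
  have hcolφ : ∀ j, (fun i => φ i j) = p (Pi.single j 1) := fun j => rfl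
  have hcol : ∀ (M : Matrix (Fin n) (Fin n) D) (j : Fin n),
      (fun i => (φ * M) i j) = p (fun i => M i j) := by
    intro M j
    rw [col_mul]
    conv_rhs => rw [show (fun i => M i j) = ∑ k, op (M k j) • Pi.single k (1 : D) from
      e_decomp _]
    rw [map_sum]
    simp only [map_smul]
    rfl
  have hgen : ∀ {M : Matrix (Fin n) (Fin n) D}, M ∈ I → ∀ j,
      (fun i => M i j) ∈ colSpan I := fun hM j => Submodule.subset_span ⟨_, hM, j, rfl⟩
  have hφI : φ ∈ I := mem_of_cols fun j => by rw [hcolφ]; exact hpV _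
  have hfix : ∀ {M : Matrix (Fin n) (Fin n) D}, M ∈ I → φ * M = M := by
    intro M hM
    funext i j
    exact congrFun ((hcol M j).trans (hpid _ (hgen hM j))) i
  refine ⟨φ, hφI, ?_, ?_, ?_⟩
  · exact hfix hφI
  · ext M
    constructor
    · intro hM
      exact ⟨M, hfix hM⟩
    · rintro ⟨N, rfl⟩
      show φ * N ∈ I
      rw [← unop_op N, ← MulOpposite.smul_eq_mul_unop]
      exact I.smul_mem _ hφI
  · apply le_antisymm
    · rw [colSpan, Submodule.span_le]
      rintro v ⟨M, hM, j, rfl⟩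
      have h1 : (fun i => M i j) = ∑ k, op (M k j) • (fun i => φ i k) := by
        rw [← col_mul, hfix hM]
      rw [h1]
      exact Submodule.sum_mem _ fun k _ =>
        Submodule.smul_mem _ _ (Submodule.subset_span ⟨k, rfl⟩)
    · rw [Submodule.span_le]
      rintro v ⟨j, rfl⟩
      exact hgen hφI j
end

section
/- Let D be a division ring which is finite-dimensional as a ℚ-algebra, let F denote the center of D (a field), let n be a positive integer, and let σ be a ring automorphism of F. If there exists a ring automorphism Φ of M_n(D) such that Φ(x·1) = σ(x)·1 for every x ∈ F (where x·1 denotes the scalar matrix with the central element x on the diagonal), then there exists a ring automorphism θ of D such that θ(x) = σ(x) for every x ∈ F. -/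
/-- Let `D` be a division ring, finite-dimensional over `ℚ`, with centre `F`,
and `σ` a ring automorphism of `F`.  If `σ` lifts to a ring automorphism of `M_n(D)` (acting on
scalar matrices with central entries as `σ` does), then `σ` lifts to a ring automorphism of `D`. -/
theorem lift_center_automorphism_to_divisionRing
    {D : Type*} [DivisionRing D] [CharZero D] [FiniteDimensional ℚ D]
    {n : ℕ} (hn : 1 ≤ n) (σ : Subring.center D ≃+* Subring.center D)
    (hΦ : ∃ Φ : Matrix (Fin n) (Fin n) D ≃+* Matrix (Fin n) (Fin n) D,
      ∀ x : Subring.center D,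
        Φ ((x : D) • (1 : Matrix (Fin n) (Fin n) D)) = (σ x : D) • (1 : Matrix (Fin n) (Fin n) D)) :
    ∃ θ : D ≃+* D, ∀ x : Subring.center D, θ (x : D) = (σ x : D) := by
  classical
  obtain ⟨Φ, hΦ⟩ := hΦ
  set z : Fin n := ⟨0, hn⟩ with hz
  set e : Matrix (Fin n) (Fin n) D := Matrix.single z z (1 : D) with he
  have he2 : e * e = e := by
    rw [he, Matrix.single_mul_single_same, one_mul]
  have hxe : ∀ x : D, x • e = Matrix.single z z x := by
    intro x
    rw [he, Matrix.smul_single, smul_eq_mul, mul_one]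
  have hene : e ≠ 0 := by
    intro h
    have : e z z = (0 : Matrix (Fin n) (Fin n) D) z z := by rw [h]
    rw [he] at this
    simp only [Matrix.single_apply_same, Matrix.zero_apply] at this
    exact one_ne_zero this
  set f : Matrix (Fin n) (Fin n) D := Φ e with hf
  have hf2 : f * f = f := by rw [hf, ← map_mul, he2]
  have hfne : f ≠ 0 := by
    intro h
    exact hene (Φ.injective (by simpa [hf] using h))
  obtain ⟨i, j, hij⟩ : ∃ i j, f i j ≠ 0 := by
    by_contra h
    push_neg at h
    exact hfne (by ext i j; simpa using h i j)
  set c : D := f i j with hc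
  set v : Fin n → D := fun k => f k j with hv
  set w : Fin n → D := fun l => c⁻¹ * f i l with hw
  set C : Matrix (Fin n) Unit D := Matrix.replicateCol Unit v with hC
  set R : Matrix Unit (Fin n) D := Matrix.replicateRow Unit w with hR
  have hentry : ∀ k l, ∑ a, f k a * f a l = f k l := by
    intro k l
    have := congrFun (congrFun hf2 k) l
    simpa [Matrix.mul_apply] using this
  have hRC : R * C = (1 : Matrix Unit Unit D) := by
    ext u u'
    simp only [hR, hC, Matrix.mul_apply, Matrix.replicateRow_apply, Matrix.replicateCol_apply, hw, hv,
      mul_assoc]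
    rw [← Finset.mul_sum, hentry, ← hc, inv_mul_cancel₀ hij]
    simp [Matrix.one_apply]
  have hfC : f * C = C := by
    ext k u
    simp only [hC, Matrix.mul_apply, Matrix.replicateCol_apply, hv]
    exact hentry k j
  have hRf : R * f = R := by
    ext u l
    simp only [hR, Matrix.mul_apply, Matrix.replicateRow_apply, hw, mul_assoc]
    rw [← Finset.mul_sum, hentry]
  set g : Matrix (Fin n) (Fin n) D := C * R with hg
  have hfg : f * g = g := by rw [hg, ← Matrix.mul_assoc, hfC]
  have hgf : g * f = g := by rw [hg, Matrix.mul_assoc, hRf]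
  have hgg : g * g = g := by
    rw [hg, Matrix.mul_assoc C R (C * R), ← Matrix.mul_assoc R C R, hRC, Matrix.one_mul]
  set b : Matrix (Fin n) (Fin n) D := Φ.symm g with hb
  have hsymf : Φ.symm f = e := by rw [hf, RingEquiv.symm_apply_apply]
  have heb : e * b = b := by
    have := congrArg Φ.symm hfg
    rwa [map_mul, hsymf, ← hb] at this
  have hbe : b * e = b := by
    have := congrArg Φ.symm hgf
    rwa [map_mul, hsymf, ← hb] at this
  have hbb : b * b = b := by
    have := congrArg Φ.symm hgg
    rwa [map_mul, ← hb] at this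
  have hcorner : ∀ M : Matrix (Fin n) (Fin n) D, e * M = M → M * e = M →
      M = Matrix.single z z (M z z) := by
    intro M h1 h2
    have key : e * (M * e) = Matrix.single z z (M z z) := by
      rw [he]
      ext k l
      rcases eq_or_ne k z with rfl | hk
      · rcases eq_or_ne l z with rfl | hl
        · simp
        · simp [hl, Ne.symm hl]
      · simp [hk, Ne.symm hk]
    calc M = e * M := h1.symm
      _ = e * (M * e) := by rw [h2]
      _ = Matrix.single z z (M z z) := key
  have hgne : g ≠ 0 := by
    intro h
    have h0 : g i j = 0 := by rw [h]; simp
    rw [hg] at h0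
    simp only [Matrix.mul_apply, hC, hR, Matrix.replicateCol_apply, Matrix.replicateRow_apply] at h0
    rw [Finset.sum_const, Finset.card_univ] at h0
    simp only [Fintype.card_unit, one_smul, hv, hw] at h0
    rw [← mul_assoc, ← hc, mul_inv_cancel₀ hij, one_mul] at h0
    exact hij h0
  have hbform := hcorner b heb hbe
  set d : D := b z z with hd
  have hdne : d ≠ 0 := by
    intro h
    apply hgne
    have hb0 : b = 0 := by rw [hbform, h, Matrix.single_zero]
    have := congrArg Φ hb0
    rwa [hb, RingEquiv.apply_symm_apply, map_zero] at this
  have hdd : d * d = d := by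
    have h1 := hbb
    rw [hbform, Matrix.single_mul_single_same] at h1
    have := congrFun (congrFun h1 z) z
    simpa using this
  have hd1 : d = 1 := mul_left_cancel₀ hdne (by rw [mul_one]; exact hdd)
  have hbeq : b = e := by rw [hbform, hd1, ← he]
  have hCRf : C * R = f := by
    have := congrArg Φ hbeq
    rw [hb, RingEquiv.apply_symm_apply, ← hf] at this
    rw [← hg, this]
  have hcornerx : ∀ x : D, e * (x • e) = x • e ∧ (x • e) * e = x • e := by
    intro x
    constructor
    · rw [hxe, he, Matrix.single_mul_single_same, one_mul]
    · rw [hxe, he, Matrix.single_mul_single_same, mul_one]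
  have hfM : ∀ x : D, f * Φ (x • e) = Φ (x • e) ∧ Φ (x • e) * f = Φ (x • e) := by
    intro x
    constructor
    · rw [hf, ← map_mul, (hcornerx x).1]
    · rw [hf, ← map_mul, (hcornerx x).2]
  have hmul11 : ∀ P Q : Matrix Unit Unit D, (P * Q) () () = P () () * Q () () := by
    intro P Q
    simp [Matrix.mul_apply]
  have hconst : ∀ P : Matrix Unit Unit D, Matrix.of (fun _ _ : Unit => P () ()) = P := by
    intro P
    ext u u'
    rfl
  have hLS : ∀ M : Matrix (Fin n) (Fin n) D, f * M = M → M * f = M →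
      C * Matrix.of (fun _ _ : Unit => (R * M * C) () ()) * R = M := by
    intro M h1 h2
    rw [hconst (R * M * C)]
    calc C * (R * M * C) * R = (C * R) * M * ((C * R)) := by
          simp only [Matrix.mul_assoc]
      _ = M := by rw [hCRf, h1, h2]
  have hTS : ∀ y : D, (R * (C * Matrix.of (fun _ _ : Unit => y) * R) * C) () () = y := by
    intro y
    have hkey : R * (C * Matrix.of (fun _ _ : Unit => y) * R) * C
        = Matrix.of (fun _ _ : Unit => y) := by
      calc R * (C * Matrix.of (fun _ _ : Unit => y) * R) * C
          = (R * C) * Matrix.of (fun _ _ : Unit => y) * (R * C) := by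
            simp only [Matrix.mul_assoc]
        _ = Matrix.of (fun _ _ : Unit => y) := by rw [hRC, one_mul, mul_one]
    rw [hkey]
    rfl
  have hcornerS : ∀ y : D, f * (C * Matrix.of (fun _ _ : Unit => y) * R)
      = C * Matrix.of (fun _ _ : Unit => y) * R ∧
      (C * Matrix.of (fun _ _ : Unit => y) * R) * f
      = C * Matrix.of (fun _ _ : Unit => y) * R := by
    intro y
    constructor
    · rw [← hCRf]
      calc (C * R) * (C * Matrix.of (fun _ _ : Unit => y) * R)
          = C * ((R * C) * (Matrix.of (fun _ _ : Unit => y) * R)) := by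
            simp only [Matrix.mul_assoc]
        _ = C * Matrix.of (fun _ _ : Unit => y) * R := by
            rw [hRC, Matrix.one_mul, ← Matrix.mul_assoc]
    · rw [← hCRf]
      calc (C * Matrix.of (fun _ _ : Unit => y) * R) * (C * R)
          = C * (Matrix.of (fun _ _ : Unit => y) * ((R * C) * R)) := by
            simp only [Matrix.mul_assoc]
        _ = C * Matrix.of (fun _ _ : Unit => y) * R := by
            rw [hRC, Matrix.one_mul, ← Matrix.mul_assoc]
  have hTmul : ∀ M N : Matrix (Fin n) (Fin n) D, M * f = M → f * N = N →
      ((R * M * C) () ()) * ((R * N * C) () ()) = (R * (M * N) * C) () () := by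
    intro M N _hM hN
    have key : (R * M * C) * (R * N * C) = R * (M * N) * C := by
      simp only [Matrix.mul_assoc]
      rw [← Matrix.mul_assoc C R (N * C), hCRf, ← Matrix.mul_assoc f N C, hN,
        ← Matrix.mul_assoc M N C]
    rw [← hmul11, key]
  refine ⟨{
    toFun := fun x : D => (R * Φ (x • e) * C) () ()
    invFun := fun y : D => (Φ.symm (C * Matrix.of (fun _ _ : Unit => y) * R)) z z
    left_inv := ?_
    right_inv := ?_
    map_mul' := ?_
    map_add' := ?_ }, ?_⟩
  · intro x
    simp only []
    rw [hLS (Φ (x • e)) (hfM x).1 (hfM x).2, RingEquiv.symm_apply_apply, hxe]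
    simp
  · intro y
    simp only []
    set b' : Matrix (Fin n) (Fin n) D := Φ.symm (C * Matrix.of (fun _ _ : Unit => y) * R)
      with hb'
    have h1 : e * b' = b' := by
      have := congrArg Φ.symm (hcornerS y).1
      rwa [map_mul, hsymf, ← hb'] at this
    have h2 : b' * e = b' := by
      have := congrArg Φ.symm (hcornerS y).2
      rwa [map_mul, hsymf, ← hb'] at this
    have hb'form : b' = (b' z z) • e := by
      rw [hxe]; exact hcorner b' h1 h2
    rw [← hb'form, hb', RingEquiv.apply_symm_apply]
    exact hTS y
  · intro x y
    have hmulsmul : (x * y) • e = (x • e) * (y • e) := by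
      rw [hxe, hxe, hxe, Matrix.single_mul_single_same]
    rw [hmulsmul, map_mul, hTmul (Φ (x • e)) (Φ (y • e)) (hfM x).2 (hfM y).1]
  · intro x y
    rw [add_smul, map_add, Matrix.mul_add, Matrix.add_mul, Matrix.add_apply]
  · intro x
    simp only [RingEquiv.coe_mk, Equiv.coe_fn_mk]
    have hcen : ∀ a : D, a * (σ x : D) = (σ x : D) * a :=
      fun a => Subring.mem_center_iff.mp (σ x).2 a
    have h1 : (x : D) • e = ((x : D) • (1 : Matrix (Fin n) (Fin n) D)) * e := by
      rw [Matrix.smul_mul, one_mul]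
    have h2 : Φ ((x : D) • e) = (σ x : D) • f := by
      rw [h1, map_mul, hΦ x, ← hf, Matrix.smul_mul, one_mul]
    have h3 : R * ((σ x : D) • f) = (σ x : D) • (R * f) := by
      ext u l
      simp only [Matrix.mul_apply, Matrix.smul_apply, smul_eq_mul, Finset.mul_sum]
      refine Finset.sum_congr rfl fun a _ => ?_
      rw [← mul_assoc, hcen, mul_assoc]
    rw [h2, h3, hRf, Matrix.smul_mul, hRC, Matrix.smul_apply, smul_eq_mul,
      Matrix.one_apply_eq, mul_one]
end

section
/- Let D be a division ring which is finite-dimensional as a ℚ-algebra, n a positive integer, and f a ring automorphism of M_n(D). Then there exist an invertible matrix P ∈ GL_n(D) and a ring automorphism σ of D such that f(M) = P · σ(M) · P⁻¹ for all M ∈ M_n(D), where σ(M) denotes the matrix obtained by applying σ to every entry of M. -/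
open Matrix

section helpers
variable {D : Type*} [DivisionRing D] {n : ℕ}

private lemma aux_mulVec_right (M : Matrix (Fin n) (Fin n) D) (v : Fin n → D) (d : D) :
    M.mulVec (fun i => v i * d) = fun i => M.mulVec v i * d := by
  funext i
  simp [Matrix.mulVec, dotProduct, Finset.sum_mul, mul_assoc]

private lemma exists_mulVec_eq {u : Fin n → D} (hu : u ≠ 0) (w : Fin n → D) :
    ∃ N : Matrix (Fin n) (Fin n) D, N.mulVec u = w := by
  obtain ⟨k, hk⟩ : ∃ k, u k ≠ 0 := by
    by_contra h; push_neg at h; exact hu (funext h)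
  refine ⟨Matrix.of fun i j => if j = k then w i * (u k)⁻¹ else 0, ?_⟩
  funext i
  simp [Matrix.mulVec, dotProduct, ite_mul, mul_assoc, inv_mul_cancel₀ hk]

private lemma exists_matrix_of_addhom (g : (Fin n → D) → (Fin n → D))
    (hadd : ∀ x y, g (x + y) = g x + g y)
    (hsmul : ∀ x d, g (fun i => x i * d) = fun i => g x i * d) :
    ∃ Q : Matrix (Fin n) (Fin n) D, ∀ v, g v = Q.mulVec v := by
  let G : (Fin n → D) →+ (Fin n → D) := AddMonoidHom.mk' g hadd
  refine ⟨Matrix.of fun i j => g (fun k => if k = j then 1 else 0) i, fun v => ?_⟩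
  have hv : v = ∑ j, (fun k => if k = j then (1:D) else 0) * fun _ => v j := by
    funext k
    simp [Finset.sum_apply, Pi.mul_apply, ite_mul]
  calc g v = G v := rfl
    _ = ∑ j, G ((fun k => if k = j then (1:D) else 0) * fun _ => v j) := by
          rw [← map_sum, ← hv]
    _ = _ := by
          funext i
          rw [Finset.sum_apply]
          simp only [Matrix.mulVec, dotProduct, Matrix.of_apply]
          refine Finset.sum_congr rfl fun j _ => ?_
          exact congrFun (hsmul (fun k => if k = j then (1:D) else 0) (v j)) i

private lemma eq_one_of_mulVec (A : Matrix (Fin n) (Fin n) D)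
    (h : ∀ v, A.mulVec v = v) : A = 1 := by
  ext i j
  have := congrFun (h (fun k => if k = j then 1 else 0)) i
  simpa [Matrix.mulVec, dotProduct, Matrix.one_apply] using this

private lemma matrix_ext_mulVec {A B : Matrix (Fin n) (Fin n) D}
    (h : ∀ v, A.mulVec v = B.mulVec v) : A = B := by
  ext i j
  have := congrFun (h (fun k => if k = j then 1 else 0)) i
  simpa [Matrix.mulVec, dotProduct] using this

end helpers

/-- Every ring automorphism `f` of `M_n(D)`, for a division ring `D`
finite-dimensional over `ℚ`, has the form `f(M) = P · σ(M) · P⁻¹` for some invertible matrix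
`P` and some ring automorphism `σ` of `D` applied entrywise. -/
theorem ringAut_matrix_eq_conj_entrywise
    {D : Type*} [DivisionRing D] [CharZero D] [FiniteDimensional ℚ D]
    {n : ℕ} (hn : 1 ≤ n)
    (f : Matrix (Fin n) (Fin n) D ≃+* Matrix (Fin n) (Fin n) D) :
    ∃ (P : (Matrix (Fin n) (Fin n) D)ˣ) (σ : D ≃+* D),
      ∀ M : Matrix (Fin n) (Fin n) D,
        f M = P.val * M.map ⇑σ * (P⁻¹).val := by
  classical
  set z : Fin n := ⟨0, hn⟩ with hz
  -- the "column" matrix of a vector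
  set Mv : (Fin n → D) → Matrix (Fin n) (Fin n) D :=
    fun v => Matrix.of fun i j => if j = z then v i else 0 with hMv
  have hMvmul : ∀ (N : Matrix (Fin n) (Fin n) D) v, N * Mv v = Mv (N.mulVec v) := by
    intro N v
    ext i j
    by_cases h : j = z <;>
      simp [hMv, Matrix.mul_apply, Matrix.mulVec, dotProduct, h, mul_ite]
  have hMvadd : ∀ x y, Mv (x + y) = Mv x + Mv y := by
    intro x y; ext i j; by_cases h : j = z <;> simp [hMv, h]
  -- the standard basis vector
  set δ : Fin n → (Fin n → D) := fun j k => if k = j then 1 else 0 with hδ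
  have hδz : δ z ≠ 0 := by
    intro h
    have := congrFun h z
    simp [hδ] at this
  have hMvδ : ∀ v, (Mv v).mulVec (δ z) = v := by
    intro v; funext i
    simp [hMv, hδ, Matrix.mulVec, dotProduct, ite_mul, mul_ite]
  -- f (Mv (δ z)) is nonzero; pick a nonzero entry
  have hvz : Mv (δ z) ≠ 0 := by
    intro h
    have : Mv (δ z) z z = 0 := by rw [h]; rfl
    simp [hMv, hδ] at this
  have hfvz : f (Mv (δ z)) ≠ 0 := by
    simpa using (EmbeddingLike.map_eq_zero_iff (f := f)).not.2 hvz
  obtain ⟨i₀, j₀, hij⟩ : ∃ i j, f (Mv (δ z)) i j ≠ 0 := by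
    by_contra h
    push_neg at h
    exact hfvz (Matrix.ext h)
  -- the intertwiner T
  set T : (Fin n → D) → (Fin n → D) := fun v i => f (Mv v) i j₀ with hT
  have hTint : ∀ (N : Matrix (Fin n) (Fin n) D) v,
      T (N.mulVec v) = (f N).mulVec (T v) := by
    intro N v
    funext i
    simp only [hT]
    rw [← hMvmul, _root_.map_mul]
    simp [Matrix.mul_apply, Matrix.mulVec, dotProduct]
  have hTadd : ∀ x y, T (x + y) = T x + T y := by
    intro x y
    funext i
    simp [hT, hMvadd]
  have hT0 : T 0 = 0 := by
    funext i
    have h0 : Mv 0 = 0 := by ext i j; simp [hMv]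
    simp [hT, h0]
  let Thom : (Fin n → D) →+ (Fin n → D) := AddMonoidHom.mk' T hTadd
  have hThom : ∀ v, Thom v = T v := fun _ => rfl
  have hTδz : T (δ z) ≠ 0 := by
    intro h
    exact hij (by simpa [hT] using congrFun h i₀)
  have hTinj : Function.Injective T := by
    intro x y hxy
    by_contra hne
    have hsub : x - y ≠ 0 := sub_ne_zero.2 hne
    obtain ⟨N, hN⟩ := exists_mulVec_eq hsub (δ z)
    apply hTδz
    rw [← hN, hTint]
    have : T (x - y) = 0 := by
      have := map_sub Thom x y
      simp only [hThom] at this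
      rw [this, hxy, sub_self]
    rw [this, Matrix.mulVec_zero]
  have hTsurj : Function.Surjective T := by
    intro w
    obtain ⟨N', hN'⟩ := exists_mulVec_eq hTδz w
    refine ⟨(f.symm N').mulVec (δ z), ?_⟩
    rw [hTint, RingEquiv.apply_symm_apply, hN']
  let Te : (Fin n → D) ≃ (Fin n → D) := Equiv.ofBijective T ⟨hTinj, hTsurj⟩
  have hTe : ∀ v, T (Te.symm v) = v := fun v => Te.apply_symm_apply v
  have hTe' : ∀ v, Te.symm (T v) = v := fun v => Te.symm_apply_apply v
  have hTint' : ∀ (N : Matrix (Fin n) (Fin n) D) x,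
      Te.symm ((f N).mulVec x) = N.mulVec (Te.symm x) := by
    intro N x
    rw [Equiv.symm_apply_eq]
    show (f N).mulVec x = T (N.mulVec (Te.symm x))
    rw [hTint, hTe]
  have hsymNv : ∀ (N : Matrix (Fin n) (Fin n) D) w,
      Te.symm (N.mulVec w) = (f.symm N).mulVec (Te.symm w) := by
    intro N w
    have := hTint' (f.symm N) w
    rwa [RingEquiv.apply_symm_apply] at this
  -- any endomorphism commuting with all matrices is a right scalar
  have hcomm : ∀ ρ : (Fin n → D) → (Fin n → D),
      (∀ (N : Matrix (Fin n) (Fin n) D) w, ρ (N.mulVec w) = N.mulVec (ρ w)) →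
      ∀ v, ρ v = fun i => v i * (ρ (δ z) z) := by
    intro ρ hρ v
    have h1 := hρ (Mv v) (δ z)
    rw [hMvδ] at h1
    rw [h1]
    funext i
    simp [hMv, Matrix.mulVec, dotProduct, ite_mul]
  -- the semilinearity map σ
  set σfun : D → D := fun d => T (fun i => Te.symm (δ z) i * d) z with hσfun
  have hσkey : ∀ u d, T (fun i => u i * d) = fun i => T u i * σfun d := by
    intro u d
    set ρ : (Fin n → D) → (Fin n → D) :=
      fun v => T (fun i => Te.symm v i * d) with hρdef
    have hρ : ∀ (N : Matrix (Fin n) (Fin n) D) w, ρ (N.mulVec w) = N.mulVec (ρ w) := by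
      intro N w
      show T (fun i => Te.symm (N.mulVec w) i * d) = N.mulVec (T (fun i => Te.symm w i * d))
      rw [hsymNv]
      rw [show (fun i => ((f.symm N).mulVec (Te.symm w)) i * d)
            = (f.symm N).mulVec (fun i => Te.symm w i * d) from
          (aux_mulVec_right _ _ _).symm]
      rw [hTint, RingEquiv.apply_symm_apply]
    have h2 := hcomm ρ hρ (T u)
    have h3 : ρ (T u) = T (fun i => u i * d) := by
      show T (fun i => Te.symm (T u) i * d) = _
      rw [hTe']
    rw [h3] at h2
    rw [h2]
  set u₁ : Fin n → D := Te.symm (δ z) with hu₁def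
  have hu₁ : T u₁ = δ z := hTe (δ z)
  have hδzz : δ z z = 1 := by simp [hδ]
  have hσd : ∀ d, T (fun i => u₁ i * d) z = σfun d := by
    intro d
    have h : T (fun i => u₁ i * d) z = T u₁ z * σfun d := congrFun (hσkey u₁ d) z
    rw [h, hu₁, hδzz, one_mul]
  have hσone : σfun 1 = 1 := by
    have := hσd 1
    rw [show (fun i => u₁ i * 1) = u₁ from funext fun i => mul_one _, hu₁, hδzz] at this
    exact this.symm
  have hσadd : ∀ d e, σfun (d + e) = σfun d + σfun e := by
    intro d e
    have h1 : (fun i => u₁ i * (d + e)) = (fun i => u₁ i * d) + fun i => u₁ i * e := by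
      funext i; simp [mul_add]
    have h2 := hσd (d + e)
    rw [h1, hTadd] at h2
    rw [← h2, Pi.add_apply, hσkey, hσkey, hu₁]
    simp [hδzz]
  have hσzero : σfun 0 = 0 := by
    have h := hσadd 0 0
    rw [add_zero] at h
    exact add_eq_left.1 h.symm
  have hσmul : ∀ d e, σfun (d * e) = σfun d * σfun e := by
    intro d e
    have h2 := hσd (d * e)
    have h1 : (fun i => u₁ i * (d * e)) = fun i => (u₁ i * d) * e := by
      funext i; rw [mul_assoc]
    rw [h1] at h2
    have h3 : T (fun i => (u₁ i * d) * e) z = T (fun i => u₁ i * d) z * σfun e :=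
      congrFun (hσkey (fun i => u₁ i * d) e) z
    rw [h3, hσd] at h2
    exact h2.symm
  have hu₁ne : u₁ ≠ 0 := by
    intro h
    apply hδz
    rw [← hu₁, h, hT0]
  have hσinj : Function.Injective σfun := by
    intro d e hde
    have h1 : T (fun i => u₁ i * d) = T (fun i => u₁ i * e) := by
      rw [hσkey, hσkey, hde]
    have h2 := hTinj h1
    obtain ⟨k, hk⟩ : ∃ k, u₁ k ≠ 0 := by
      by_contra h; push_neg at h; exact hu₁ne (funext h)
    have := congrFun h2 k
    exact mul_left_cancel₀ hk this
  have hσsurj : Function.Surjective σfun := by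
    intro e
    set ρ' : (Fin n → D) → (Fin n → D) := fun v => Te.symm (fun i => T v i * e) with hρ'
    have hρ'comm : ∀ (N : Matrix (Fin n) (Fin n) D) w,
        ρ' (N.mulVec w) = N.mulVec (ρ' w) := by
      intro N w
      show Te.symm (fun i => T (N.mulVec w) i * e) = N.mulVec (Te.symm (fun i => T w i * e))
      rw [hTint]
      rw [show (fun i => ((f N).mulVec (T w)) i * e)
            = (f N).mulVec (fun i => T w i * e) from (aux_mulVec_right _ _ _).symm]
      rw [hTint']
    have h2 := hcomm ρ' hρ'comm u₁
    set c := ρ' (δ z) z with hc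
    refine ⟨c, ?_⟩
    have h3 : ρ' u₁ = Te.symm (fun i => δ z i * e) := by
      show Te.symm (fun i => T u₁ i * e) = _
      rw [hu₁]
    rw [h3] at h2
    have h4 : (fun i => δ z i * e) = T (fun i => u₁ i * c) := by
      rw [← h2, hTe]
    rw [hσkey, hu₁] at h4
    have := congrFun h4 z
    simpa [hδzz] using this.symm
  let σhom : D →+* D :=
    { toFun := σfun, map_one' := hσone, map_mul' := hσmul,
      map_zero' := hσzero, map_add' := hσadd }
  let σ : D ≃+* D := RingEquiv.ofBijective σhom ⟨hσinj, hσsurj⟩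
  have hσco : ⇑σ = σfun := rfl
  have hσsymm : ∀ x, σfun (σ.symm x) = x := fun x => σ.apply_symm_apply x
  -- the matrix P and the key formula T u = P.mulVec (σ ∘ u)
  set P : Matrix (Fin n) (Fin n) D := Matrix.of fun i j => T (δ j) i with hPdef
  have hP : ∀ u, T u = P.mulVec (fun j => σfun (u j)) := by
    intro u
    have hu : u = ∑ j, (fun k => δ j k * u j) := by
      funext k
      rw [Finset.sum_apply]
      simp [hδ, ite_mul]
    calc T u = Thom u := rfl
      _ = ∑ j, Thom (fun k => δ j k * u j) := by rw [← map_sum]; exact congrArg Thom hu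
      _ = ∑ j, (fun i => T (δ j) i * σfun (u j)) := by
          refine Finset.sum_congr rfl fun j _ => ?_
          rw [hThom, hσkey]
      _ = P.mulVec (fun j => σfun (u j)) := by
          funext i
          rw [Finset.sum_apply]
          simp [hPdef, Matrix.mulVec, dotProduct]
  have hPmv : ∀ v, P.mulVec v = T (fun j => σ.symm (v j)) := by
    intro v
    rw [hP (fun j => σ.symm (v j))]
    have h : (fun j => σfun (σ.symm (v j))) = v := funext fun j => hσsymm (v j)
    rw [h]
  have hPbij : Function.Bijective (fun v => P.mulVec v) := by
    constructor
    · intro x y hxy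
      simp only [hPmv] at hxy
      have := hTinj hxy
      funext j
      have := congrFun this j
      exact σ.symm.injective this
    · intro w
      refine ⟨fun j => σfun ((Te.symm w) j), ?_⟩
      simp only
      rw [← hP, hTe]
  let PE : (Fin n → D) ≃ (Fin n → D) := Equiv.ofBijective _ hPbij
  have hPE : ∀ v, P.mulVec (PE.symm v) = v := fun v => PE.apply_symm_apply v
  have hPE' : ∀ v, PE.symm (P.mulVec v) = v := fun v => PE.symm_apply_apply v
  obtain ⟨Q, hQ⟩ : ∃ Q : Matrix (Fin n) (Fin n) D, ∀ v, PE.symm v = Q.mulVec v := by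
    apply exists_matrix_of_addhom
    · intro x y
      apply hPbij.1
      show P.mulVec _ = P.mulVec _
      rw [hPE, Matrix.mulVec_add, hPE, hPE]
    · intro x d
      apply hPbij.1
      show P.mulVec _ = P.mulVec _
      rw [hPE, aux_mulVec_right, hPE]
  have hQP : Q * P = 1 := by
    apply eq_one_of_mulVec
    intro v
    rw [← Matrix.mulVec_mulVec, ← hQ, hPE']
  have hPQ : P * Q = 1 := by
    apply eq_one_of_mulVec
    intro v
    rw [← Matrix.mulVec_mulVec, ← hQ, hPE]
  refine ⟨⟨P, Q, hPQ, hQP⟩, σ, fun M => ?_⟩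
  show f M = P * M.map ⇑σ * Q
  have hmap : ∀ v, (fun i => σfun ((M.mulVec (fun j => σ.symm (v j))) i))
      = (M.map ⇑σ).mulVec v := by
    intro v
    funext i
    show σhom ((M.mulVec fun j => σ.symm (v j)) i) = _
    simp only [Matrix.mulVec, dotProduct, Matrix.map_apply]
    rw [map_sum σhom]
    refine Finset.sum_congr rfl fun j _ => ?_
    show σfun (M i j * σ.symm (v j)) = σ (M i j) * v j
    rw [hσmul, hσsymm]
    rfl
  have key : f M * P = P * M.map ⇑σ := by
    apply matrix_ext_mulVec
    intro v
    rw [← Matrix.mulVec_mulVec, ← Matrix.mulVec_mulVec, hPmv, ← hTint, hP, hmap]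
  calc f M = f M * (P * Q) := by rw [hPQ, mul_one]
    _ = (f M * P) * Q := by rw [mul_assoc]
    _ = P * M.map ⇑σ * Q := by rw [key]
end

section
/- Let D be a division ring, n ≥ 2 an integer, k an integer with 1 ≤ k ≤ n−1, P ∈ GL_n(D) an invertible matrix, and σ a ring automorphism of D. Suppose that for every right D-subspace V of D^n of dimension k one has P·σ(V) = V, where σ(V) is the image of V under coordinatewise application of σ and P acts on D^n by matrix–vector multiplication on the left. Then there exists λ ∈ D× such that P is the scalar matrix λ·1 and σ(x) = λ⁻¹·x·λ for all x ∈ D; in particular σ fixes the center of D pointwise, and if σ is the identity then λ lies in the center of D. -/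
set_option maxHeartbeats 1000000

open Module Submodule

/-- Auxiliary: in a space of dimension at least `k+1` over a division ring, given `v ≠ 0`
and `w ∉ span {v}`, there exists a `k`-dimensional subspace containing `v` but not `w`. -/
private lemma aux_exists_subspace {K : Type*} [DivisionRing K] {M : Type*} [AddCommGroup M]
    [Module K M] {k : ℕ} (hk1 : 1 ≤ k) (hkfr : k + 1 ≤ finrank K M) {v w : M}
    (hv : v ≠ 0) (hw : w ∉ Submodule.span K {v}) :
    ∃ V : Submodule K M, finrank K V = k ∧ v ∈ V ∧ w ∉ V := by
  have h2 : LinearIndependent K ![w, v] := by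
    rw [linearIndependent_fin2]
    refine ⟨by simpa using hv, fun a ha => ?_⟩
    apply hw
    rw [Submodule.mem_span_singleton]
    exact ⟨a, by simpa using ha⟩
  have claim : ∀ m (hm : 2 ≤ m), m ≤ finrank K M →
      ∃ f : Fin m → M, LinearIndependent K f ∧
        f ⟨0, by omega⟩ = w ∧ f ⟨1, by omega⟩ = v := by
    intro m hm
    induction m, hm using Nat.le_induction with
    | base => intro _; exact ⟨![w, v], h2, rfl, rfl⟩
    | succ m hm ih =>
      intro hle
      obtain ⟨f, hf, h0, h1⟩ := ih (by omega)
      obtain ⟨x, hx⟩ := exists_linearIndependent_snoc_of_lt_finrank hf (by omega)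
      refine ⟨Fin.snoc f x, hx, ?_, ?_⟩
      · have h : (⟨0, by omega⟩ : Fin (m + 1)) = Fin.castSucc ⟨0, by omega⟩ := rfl
        rw [h, Fin.snoc_castSucc]; exact h0
      · have h : (⟨1, by omega⟩ : Fin (m + 1)) = Fin.castSucc ⟨1, by omega⟩ := rfl
        rw [h, Fin.snoc_castSucc]; exact h1
  obtain ⟨f, hf, h0, h1⟩ := claim (k + 1) (by omega) hkfr
  refine ⟨Submodule.span K (Set.range (f ∘ Fin.succ)), ?_, ?_, ?_⟩
  · rw [finrank_span_eq_card (hf.comp Fin.succ (Fin.succ_injective _))]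
    simp
  · exact Submodule.subset_span ⟨⟨0, by omega⟩, h1⟩
  · rw [Set.range_comp]
    intro hmem
    refine hf.notMem_span_image (s := Set.range Fin.succ) (x := 0) ?_ (h0 ▸ hmem)
    rintro ⟨i, hi⟩
    exact Fin.succ_ne_zero i hi

/-- If `P ∈ GL_n(D)` and a ring automorphism `σ` of `D` satisfy `P·σ(V) = V`
for all right subspaces `V` of `D^n` of a fixed dimension `k` with `1 ≤ k ≤ n-1`, then `P` is
a homothety `λ·1` and `σ` is conjugation by `λ`; in particular `σ` fixes the centre of `D`
pointwise, and if `σ = id` then `λ` is central. -/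
theorem homothety_of_fixing_all_subspaces
    {D : Type*} [DivisionRing D] {n k : ℕ} (hn : 2 ≤ n) (hk1 : 1 ≤ k) (hk2 : k ≤ n - 1)
    (P : (Matrix (Fin n) (Fin n) D)ˣ) (σ : D ≃+* D)
    (hfix : ∀ V : Submodule Dᵐᵒᵖ (Fin n → D), Module.finrank Dᵐᵒᵖ V = k →
      (fun v : Fin n → D => P.val.mulVec fun i => σ (v i)) '' (V : Set (Fin n → D)) = V) :
    ∃ lam : Dˣ,
      P.val = (lam : D) • (1 : Matrix (Fin n) (Fin n) D) ∧
      (∀ x : D, σ x = (lam : D)⁻¹ * x * (lam : D)) ∧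
      (∀ x ∈ Subring.center D, σ x = x) ∧
      (σ = RingEquiv.refl D → (lam : D) ∈ Subring.center D) := by
  classical
  set T : (Fin n → D) → (Fin n → D) := fun v => P.val.mulVec fun i => σ (v i) with hT
  -- the coordinatewise `op` linear equivalence
  let e : (Fin n → D) ≃ₗ[Dᵐᵒᵖ] (Fin n → Dᵐᵒᵖ) :=
    { toFun := fun v i => MulOpposite.op (v i)
      invFun := fun w i => MulOpposite.unop (w i)
      map_add' := fun a b => by ext i; simp
      map_smul' := fun r a => by
        ext i
        simp [MulOpposite.smul_eq_mul_unop, smul_eq_mul]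
      left_inv := fun a => by ext i; simp
      right_inv := fun a => by ext i; simp }
  have hfr : finrank Dᵐᵒᵖ (Fin n → D) = n := by
    rw [e.finrank_eq, Module.finrank_fin_fun]
  -- Step B : T maps every line into itself
  have hline : ∀ v : Fin n → D, T v ∈ Submodule.span Dᵐᵒᵖ {v} := by
    intro v
    by_cases hv : v = 0
    · subst hv
      have h : T 0 = 0 := by
        have hz : (fun i : Fin n => σ ((0 : Fin n → D) i)) = (0 : Fin n → D) := by ext i; simp
        rw [hT]
        simp only [hz]
        exact Matrix.mulVec_zero _
      rw [h]; exact zero_mem _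
    by_contra hTv
    obtain ⟨V, hVr, hvV, hwV⟩ :=
      aux_exists_subspace (K := Dᵐᵒᵖ) hk1 (by rw [hfr]; omega) hv hTv
    have h : T v ∈ (V : Set (Fin n → D)) := by
      rw [← hfix V hVr]
      exact ⟨v, hvV, rfl⟩
    exact hwV h
  -- extract scalars
  have hsc : ∀ v : Fin n → D, ∃ a : D, ∀ i, T v i = v i * a := by
    intro v
    obtain ⟨a, ha⟩ := (Submodule.mem_span_singleton).1 (hline v)
    exact ⟨a.unop, fun i => by rw [← ha]; rfl⟩
  -- computation of T on basis-like vectors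
  have hfun : ∀ (c : D) (j : Fin n), (fun i => σ ((Pi.single j c : Fin n → D) i)) = Pi.single j (σ c) := by
    intro c j
    ext i
    by_cases h : i = j <;> simp [Pi.single_apply, h]
  have hTsingle : ∀ (c : D) (j : Fin n),
      T (Pi.single j c) = fun i => P.val i j * σ c := by
    intro c j
    rw [hT]
    simp only [hfun, Matrix.mulVec_single]
    rfl
  have hTpair : ∀ (c d : D) (j j' : Fin n),
      T (Pi.single j c + Pi.single j' d) = fun i => P.val i j * σ c + P.val i j' * σ d := by
    intro c d j j' 
    rw [hT]
    have h : (fun i => σ ((Pi.single j c + Pi.single j' d : Fin n → D) i))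
        = (Pi.single j (σ c) + Pi.single j' (σ d) : Fin n → D) := by
      ext i
      simp only [Pi.add_apply, map_add]
      rw [← hfun c j, ← hfun d j']
    simp only [h, Matrix.mulVec_add, Matrix.mulVec_single]
    rfl
  -- the two distinguished indices
  set i0 : Fin n := ⟨0, by omega⟩ with hi0
  set i1 : Fin n := ⟨1, by omega⟩ with hi1
  have h01 : i0 ≠ i1 := by simp [hi0, hi1]
  -- the diagonal scalars
  have hdiag : ∀ j : Fin n, ∃ a : D, (∀ i, P.val i j = if i = j then a else 0) := by
    intro j
    obtain ⟨a, ha⟩ := hsc (Pi.single j 1)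
    refine ⟨a, fun i => ?_⟩
    have h := ha i
    rw [hTsingle 1 j] at h
    simp only [map_one, mul_one, Pi.single_apply] at h
    rw [h]
    split <;> simp
  choose a hA using hdiag
  -- the key relation
  have key : ∀ (j : Fin n) (d : D), j ≠ i0 → d * a i0 = a j * σ d := by
    intro j d hj
    obtain ⟨b, hb⟩ := hsc (Pi.single i0 1 + Pi.single j d)
    rw [hTpair 1 d i0 j] at hb
    have hPii : ∀ i : Fin n, P.val i i = a i := fun i => by rw [hA i i]; simp
    have hP0 : ∀ i j' : Fin n, i ≠ j' → P.val i j' = 0 := fun i j' h => by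
      rw [hA j' i]; simp [h]
    have h0 := hb i0
    have h1 := hb j
    simp only [Pi.add_apply, Pi.single_eq_same, Pi.single_eq_of_ne (Ne.symm hj),
      Pi.single_eq_of_ne hj, map_one, mul_one, hPii, hP0 i0 j (Ne.symm hj), hP0 j i0 hj,
      zero_mul, add_zero, zero_add, one_mul, mul_zero] at h0 h1
    -- h0 : a i0 = b ; h1 : a j * σ d = d * b
    rw [h0]
    exact h1.symm
  have haj : ∀ j : Fin n, a j = a i0 := by
    intro j
    by_cases hj : j = i0
    · rw [hj]
    · have h := key j 1 hj
      simpa using h.symm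
  set lam : D := a i0 with hlam
  -- lam is nonzero
  have hlam0 : lam ≠ 0 := by
    intro h0
    have hP0 : P.val = 0 := by
      ext i j
      rw [hA j i, haj j, h0]
      split <;> rfl
    have hvi := P.val_inv
    rw [hP0, zero_mul] at hvi
    have h3 : (0 : D) = 1 := by
      simpa [Matrix.one_apply] using congrFun (congrFun hvi i0) i0
    exact one_ne_zero h3.symm
  -- conjugation formula
  have hconj : ∀ d : D, σ d = lam⁻¹ * d * lam := by
    intro d
    have h : d * lam = lam * σ d := by
      have h := key i1 d (Ne.symm h01)
      rwa [haj i1] at h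
    calc σ d = lam⁻¹ * (lam * σ d) := by
          rw [← mul_assoc, inv_mul_cancel₀ hlam0, one_mul]
      _ = lam⁻¹ * (d * lam) := by rw [h]
      _ = lam⁻¹ * d * lam := by rw [mul_assoc]
  refine ⟨Units.mk0 lam hlam0, ?_, hconj, ?_, ?_⟩
  · ext i j
    rw [hA j i, haj j]
    simp only [Matrix.smul_apply, Matrix.one_apply, smul_eq_mul, Units.val_mk0, mul_ite,
      mul_one, mul_zero]
  · intro x hx
    have hc := Subring.mem_center_iff.1 hx
    rw [hconj x, hc lam⁻¹, mul_assoc, inv_mul_cancel₀ hlam0, mul_one]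
  · intro hσ
    rw [Subring.mem_center_iff]
    intro g
    have h := hconj g
    rw [hσ] at h
    simp only [RingEquiv.refl_apply] at h
    have h2 : lam * g = lam * (lam⁻¹ * g * lam) := by rw [← h]
    rw [← mul_assoc, ← mul_assoc, mul_inv_cancel₀ hlam0, one_mul] at h2
    exact h2.symm
end

section
/- Let D be a division ring which is finite-dimensional as a ℚ-algebra, n ≥ 2 an integer, G a finite subgroup of the group of ring automorphisms of M_n(D), and k an integer with 1 ≤ k ≤ n−1. Then there are infinitely many right ideals I of M_n(D) such that the associated right subspace V_I of D^n has dimension k and such that g(I) ≠ I for every g ∈ G with g ≠ id; equivalently, the set of right D-subspaces V of D^n of dimension k such that g(I_V) ≠ I_V for all g ∈ G \ {id} is infinite. -/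
open MulOpposite

variable {D : Type*} [DivisionRing D] {n : ℕ}

open MulOpposite Matrix Polynomial Finset

namespace S10

/-- polynomial-like functions into a `ℚ`-vector space -/
def IsPF {V : Type*} [AddCommGroup V] [Module ℚ V] (f : ℚ → V) : Prop :=
  ∃ (M : ℕ) (c : ℕ → V), ∀ t : ℚ, f t = ∑ i ∈ Finset.range M, t ^ i • c i

variable {V : Type*} [AddCommGroup V] [Module ℚ V]

lemma vanish_aux (M : ℕ) (c : ℕ → V)
    (h : {t : ℚ | ∑ i ∈ Finset.range M, t ^ i • c i = 0}.Infinite) :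
    ∀ i, i < M → c i = 0 := by
  intro i hi
  rw [← Module.forall_dual_apply_eq_zero_iff ℚ]
  intro φ
  set q : Polynomial ℚ := ∑ j ∈ Finset.range M, Polynomial.monomial j (φ (c j)) with hq
  have hqeval : ∀ t : ℚ, q.eval t = φ (∑ j ∈ Finset.range M, t ^ j • c j) := by
    intro t
    rw [hq, Polynomial.eval_finset_sum, map_sum]
    refine Finset.sum_congr rfl fun j _ => ?_
    rw [Polynomial.eval_monomial, φ.map_smul, smul_eq_mul, mul_comm]
  have hq0 : q = 0 := by
    apply Polynomial.eq_zero_of_infinite_isRoot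
    apply h.mono
    intro t ht
    simp only [Set.mem_setOf_eq] at ht ⊢
    rw [Polynomial.IsRoot, hqeval, ht, map_zero]
  have hc := congrArg (fun p => Polynomial.coeff p i) hq0
  simp only [hq, Polynomial.finset_sum_coeff, Polynomial.coeff_monomial,
    Polynomial.coeff_zero] at hc
  rwa [Finset.sum_ite_eq' (Finset.range M) i (fun j => φ (c j)),
    if_pos (Finset.mem_range.mpr hi)] at hc

lemma isPF_congr {f h : ℚ → V} (he : ∀ t, f t = h t) (hh : IsPF h) : IsPF f := by
  obtain ⟨M, c, hc⟩ := hh; exact ⟨M, c, fun t => (he t).trans (hc t)⟩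

lemma isPF_const (v : V) : IsPF (fun _ : ℚ => v) :=
  ⟨1, fun _ => v, fun t => by simp⟩

private lemma rep_extend (M M' : ℕ) (hMM' : M ≤ M') (c : ℕ → V) (t : ℚ) :
    ∑ i ∈ Finset.range M, t ^ i • c i
      = ∑ i ∈ Finset.range M', t ^ i • (if i < M then c i else 0) := by
  rw [← Finset.sum_subset (Finset.range_subset_range.mpr hMM')]
  · exact Finset.sum_congr rfl fun i hi => by rw [if_pos (Finset.mem_range.mp hi)]
  · intro i _ hi
    rw [if_neg (by simpa using hi), smul_zero]

lemma isPF_add {f g : ℚ → V} (hf : IsPF f) (hg : IsPF g) : IsPF (fun t => f t + g t) := by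
  obtain ⟨M, c, hc⟩ := hf; obtain ⟨M', c', hc'⟩ := hg
  refine ⟨max M M', fun i => (if i < M then c i else 0) + (if i < M' then c' i else 0), fun t => ?_⟩
  show f t + g t = _
  rw [hc t, hc' t, rep_extend M (max M M') (le_max_left _ _) c t,
    rep_extend M' (max M M') (le_max_right _ _) c' t, ← Finset.sum_add_distrib]
  exact Finset.sum_congr rfl fun i _ => by rw [smul_add]

lemma isPF_neg {f : ℚ → V} (hf : IsPF f) : IsPF (fun t => - f t) := by
  obtain ⟨M, c, hc⟩ := hf
  exact ⟨M, fun i => - c i, fun t => by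
    show - f t = _
    rw [hc t, ← Finset.sum_neg_distrib]; simp⟩

lemma isPF_sub {f g : ℚ → V} (hf : IsPF f) (hg : IsPF g) : IsPF (fun t => f t - g t) := by
  have := isPF_add hf (isPF_neg hg)
  exact isPF_congr (fun t => by rw [sub_eq_add_neg]) this

lemma isPF_evalsmul (p : Polynomial ℚ) (w : V) : IsPF (fun t => p.eval t • w) := by
  refine ⟨p.natDegree + 1, fun i => p.coeff i • w, fun t => ?_⟩
  show p.eval t • w = _
  rw [Polynomial.eval_eq_sum_range, Finset.sum_smul]
  exact Finset.sum_congr rfl fun i _ => by rw [smul_smul, mul_comm]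

lemma isPF_finsum {ι : Type*} (S : Finset ι) (f : ι → ℚ → V)
    (h : ∀ j ∈ S, IsPF (f j)) : IsPF (fun t => ∑ j ∈ S, f j t) := by
  classical
  induction S using Finset.induction_on with
  | empty => exact isPF_congr (fun t => by simp) (isPF_const 0)
  | @insert a s ha ih =>
    have := isPF_add (h a (Finset.mem_insert_self a s))
      (ih fun j hj => h j (Finset.mem_insert_of_mem hj))
    exact isPF_congr (fun t => Finset.sum_insert ha) this

lemma isPF_mul {A : Type*} [Ring A] [Algebra ℚ A] {f g : ℚ → A}
    (hf : IsPF f) (hg : IsPF g) : IsPF (fun t => f t * g t) := by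
  obtain ⟨M, a, ha⟩ := hf; obtain ⟨M', b, hb⟩ := hg
  refine ⟨M + M',
    fun l => ∑ i ∈ Finset.range M, ∑ j ∈ Finset.range M', if i + j = l then a i * b j else 0,
    fun t => ?_⟩
  show f t * g t = _
  rw [ha t, hb t, Finset.sum_mul_sum]
  symm
  calc
    ∑ l ∈ Finset.range (M + M'), t ^ l •
        (∑ i ∈ Finset.range M, ∑ j ∈ Finset.range M', if i + j = l then a i * b j else 0)
      = ∑ l ∈ Finset.range (M + M'), ∑ i ∈ Finset.range M, ∑ j ∈ Finset.range M',
          (if i + j = l then t ^ l • (a i * b j) else 0) := by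
        refine Finset.sum_congr rfl fun l _ => ?_
        rw [Finset.smul_sum]
        refine Finset.sum_congr rfl fun i _ => ?_
        rw [Finset.smul_sum]
        refine Finset.sum_congr rfl fun j _ => ?_
        split <;> simp
    _ = ∑ i ∈ Finset.range M, ∑ l ∈ Finset.range (M + M'), ∑ j ∈ Finset.range M',
          (if i + j = l then t ^ l • (a i * b j) else 0) := Finset.sum_comm
    _ = ∑ i ∈ Finset.range M, ∑ j ∈ Finset.range M', ∑ l ∈ Finset.range (M + M'),
          (if i + j = l then t ^ l • (a i * b j) else 0) :=
        Finset.sum_congr rfl fun i _ => Finset.sum_comm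
    _ = ∑ i ∈ Finset.range M, ∑ j ∈ Finset.range M', t ^ i • a i * t ^ j • b j := by
        refine Finset.sum_congr rfl fun i hi => Finset.sum_congr rfl fun j hj => ?_
        have hi' := Finset.mem_range.mp hi
        have hj' := Finset.mem_range.mp hj
        rw [Finset.sum_ite_eq (Finset.range (M + M')) (i + j)
            (fun l => t ^ l • (a i * b j)), if_pos (Finset.mem_range.mpr (by omega))]
        rw [smul_mul_assoc, mul_smul_comm, smul_smul, ← pow_add]

lemma isPF_zero_everywhere {f : ℚ → V} (hf : IsPF f)
    (h : {t : ℚ | f t = 0}.Infinite) : ∀ t, f t = 0 := by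
  obtain ⟨M, c, hc⟩ := hf
  have hset : {t : ℚ | f t = 0} = {t : ℚ | ∑ i ∈ Finset.range M, t ^ i • c i = 0} := by
    ext t; simp only [Set.mem_setOf_eq, hc t]
  rw [hset] at h
  have hz := vanish_aux M c h
  intro t
  rw [hc t]
  refine Finset.sum_eq_zero fun i hi => ?_
  rw [hz i (Finset.mem_range.mp hi), smul_zero]

section Matrices

variable {D : Type*} [DivisionRing D] {n : ℕ}

/-- the idempotent with column space the graph of the lower-left block of `T` -/
def Ee (k : ℕ) (T : Matrix (Fin n) (Fin n) D) : Matrix (Fin n) (Fin n) D :=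
  Matrix.of fun i j =>
    if (j : ℕ) < k then (if (i : ℕ) < k then (if i = j then 1 else 0) else T i j) else 0

lemma ee_apply (k : ℕ) (T : Matrix (Fin n) (Fin n) D) (i j : Fin n) :
    Ee k T i j
      = if (j : ℕ) < k then (if (i : ℕ) < k then (if i = j then 1 else 0) else T i j) else 0 :=
  rfl

lemma ee_apply_col_ge (k : ℕ) (T : Matrix (Fin n) (Fin n) D) (i j : Fin n)
    (hj : ¬ (j : ℕ) < k) : Ee k T i j = 0 := by rw [ee_apply, if_neg hj]

lemma ee_apply_lt (k : ℕ) (T : Matrix (Fin n) (Fin n) D) {i j : Fin n}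
    (hi : (i : ℕ) < k) (hj : (j : ℕ) < k) :
    Ee k T i j = if i = j then 1 else 0 := by
  rw [ee_apply, if_pos hj, if_pos hi]

lemma ee_apply_low (k : ℕ) (T : Matrix (Fin n) (Fin n) D) {i j : Fin n}
    (hi : ¬ (i : ℕ) < k) (hj : (j : ℕ) < k) :
    Ee k T i j = T i j := by
  rw [ee_apply, if_pos hj, if_neg hi]

lemma ee_mul (k : ℕ) (T S : Matrix (Fin n) (Fin n) D) :
    Ee k T * Ee k S = Ee k T := by
  ext i j
  rw [Matrix.mul_apply]
  by_cases hj : (j : ℕ) < k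
  · rw [Finset.sum_eq_single j]
    · rw [ee_apply_lt k S hj hj, if_pos rfl, mul_one]
    · intro l _ hl
      by_cases hlk : (l : ℕ) < k
      · rw [ee_apply_lt k S hlk hj, if_neg hl, mul_zero]
      · rw [ee_apply_col_ge k T i l hlk, zero_mul]
    · intro h; exact absurd (Finset.mem_univ j) h
  · rw [ee_apply_col_ge k T i j hj]
    refine Finset.sum_eq_zero fun l _ => ?_
    rw [ee_apply_col_ge k S l j hj, mul_zero]

lemma ee_mulVec_upper (k : ℕ) (T : Matrix (Fin n) (Fin n) D) (x : Fin n → D)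
    {i : Fin n} (hi : (i : ℕ) < k) : (Ee k T *ᵥ x) i = x i := by
  show (∑ j, Ee k T i j * x j) = x i
  rw [Finset.sum_eq_single i]
  · rw [ee_apply_lt k T hi hi, if_pos rfl, one_mul]
  · intro l _ hl
    by_cases hlk : (l : ℕ) < k
    · rw [ee_apply_lt k T hi hlk, if_neg (Ne.symm hl), zero_mul]
    · rw [ee_apply_col_ge k T i l hlk, zero_mul]
  · intro h; exact absurd (Finset.mem_univ i) h

lemma ee0_mulVec_lower (k : ℕ) (x : Fin n → D) {i : Fin n} (hi : ¬ (i : ℕ) < k) :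
    (Ee k (0 : Matrix (Fin n) (Fin n) D) *ᵥ x) i = 0 := by
  show (∑ j, Ee k 0 i j * x j) = 0
  refine Finset.sum_eq_zero fun l _ => ?_
  by_cases hlk : (l : ℕ) < k
  · rw [ee_apply_low k 0 hi hlk]; simp
  · rw [ee_apply_col_ge k 0 i l hlk, zero_mul]

/-- From the fixed-ideal equations for all `T`, the idempotents themselves are fixed. -/
lemma fix_idem (k : ℕ) (g : RingAut (Matrix (Fin n) (Fin n) D))
    (H : ∀ T : Matrix (Fin n) (Fin n) D,
      Ee k T * g (Ee k T) = g (Ee k T) ∧ g (Ee k T) * Ee k T = Ee k T) :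
    ∀ T : Matrix (Fin n) (Fin n) D, g (Ee k T) = Ee k T := by
  intro T
  set f : Matrix (Fin n) (Fin n) D → Matrix (Fin n) (Fin n) D := fun S => g (Ee k S) with hf
  have fmul : ∀ T S, f T * f S = f T := by
    intro T S
    rw [hf]
    show g (Ee k T) * g (Ee k S) = g (Ee k T)
    rw [← _root_.map_mul, ee_mul]
  have hyp1 : ∀ T, Ee k T * f T = f T := fun T => (H T).1
  have hyp2 : ∀ T, f T * Ee k T = Ee k T := fun T => (H T).2
  -- Claim Z : f T kills vectors supported in coordinates ≥ k
  have claimZ : ∀ (T : Matrix (Fin n) (Fin n) D) (v : Fin n → D),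
      (∀ j : Fin n, (j : ℕ) < k → v j = 0) → f T *ᵥ v = 0 := by
    intro T v hv
    set x : Fin n → D := f 0 *ᵥ v with hx
    have hx_fix : Ee k 0 *ᵥ x = x := by
      rw [hx, Matrix.mulVec_mulVec, hyp1 0]
    have xlow : ∀ i : Fin n, ¬ (i : ℕ) < k → x i = 0 := by
      intro i hi
      conv_lhs => rw [← hx_fix]
      exact ee0_mulVec_lower k x hi
    have xup : ∀ i : Fin n, (i : ℕ) < k → x i = 0 := by
      intro j0 hj0
      by_contra hxne
      set z : Fin n → D := v - x with hz
      have hz0 : f 0 *ᵥ z = 0 := by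
        rw [hz, Matrix.mulVec_sub, hx, Matrix.mulVec_mulVec, fmul 0 0, sub_self]
      have hzj0 : z j0 = - x j0 := by
        rw [hz]; show v j0 - x j0 = - x j0; rw [hv j0 hj0, zero_sub]
      have hzne : z j0 ≠ 0 := by rw [hzj0]; exact neg_ne_zero.mpr hxne
      set T' : Matrix (Fin n) (Fin n) D :=
        Matrix.of (fun i j => if j = j0 then z i * (z j0)⁻¹ else 0) with hT'
      have ez : Ee k T' *ᵥ z = z := by
        funext i
        by_cases hi : (i : ℕ) < k
        · exact ee_mulVec_upper k T' z hi
        · show (∑ j, Ee k T' i j * z j) = z i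
          rw [Finset.sum_eq_single j0]
          · rw [ee_apply_low k T' hi hj0]
            show (if j0 = j0 then z i * (z j0)⁻¹ else 0) * z j0 = z i
            rw [if_pos rfl, mul_assoc, inv_mul_cancel₀ hzne, mul_one]
          · intro l _ hl
            by_cases hlk : (l : ℕ) < k
            · rw [ee_apply_low k T' hi hlk]
              show (if l = j0 then z i * (z j0)⁻¹ else 0) * z l = 0
              rw [if_neg hl, zero_mul]
            · rw [ee_apply_col_ge k T' i l hlk, zero_mul]
          · intro h; exact absurd (Finset.mem_univ j0) h
      have step1 : f T' *ᵥ z = z := by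
        conv_lhs => rw [← ez, Matrix.mulVec_mulVec, hyp2 T']
        exact ez
      have step2 : f T' *ᵥ z = 0 := by
        rw [hz, Matrix.mulVec_sub, hx, Matrix.mulVec_mulVec, fmul T' 0, sub_self]
      rw [step1] at step2
      exact hzne (by rw [step2]; rfl)
    have hx0 : x = 0 := by
      funext i
      by_cases hi : (i : ℕ) < k
      · exact xup i hi
      · exact xlow i hi
    calc f T *ᵥ v = (f T * f 0) *ᵥ v := by rw [fmul T 0]
      _ = f T *ᵥ x := by rw [← Matrix.mulVec_mulVec, hx]
      _ = 0 := by rw [hx0, Matrix.mulVec_zero]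
  -- now f T = Ee k T
  have key : ∀ v : Fin n → D, f T *ᵥ v = Ee k T *ᵥ v := by
    intro v
    have hsupp : ∀ j : Fin n, (j : ℕ) < k → (v - Ee k T *ᵥ v) j = 0 := by
      intro j hj
      show v j - (Ee k T *ᵥ v) j = 0
      rw [ee_mulVec_upper k T v hj, sub_self]
    have hsplit : v = Ee k T *ᵥ v + (v - Ee k T *ᵥ v) := by abel
    calc f T *ᵥ v = f T *ᵥ (Ee k T *ᵥ v + (v - Ee k T *ᵥ v)) := by rw [← hsplit]
      _ = f T *ᵥ (Ee k T *ᵥ v) + f T *ᵥ (v - Ee k T *ᵥ v) := Matrix.mulVec_add _ _ _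
      _ = (f T * Ee k T) *ᵥ v + 0 := by
          rw [Matrix.mulVec_mulVec, claimZ T _ hsupp]
      _ = Ee k T *ᵥ v := by rw [hyp2 T, add_zero]
  show f T = Ee k T
  ext i j
  have h1 := congrFun (key (Pi.single j 1)) i
  rw [Matrix.mulVec_single, Matrix.mulVec_single] at h1
  simpa using h1

lemma std_apply (a b i j : Fin n) (d : D) :
    Matrix.single a b d i j = if a = i ∧ b = j then d else 0 := rfl

lemma hEe0_mul (k : ℕ) (M : Matrix (Fin n) (Fin n) D) :
    Ee k 0 * M = Matrix.of (fun (i j : Fin n) => if (i : ℕ) < k then M i j else 0) := by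
  ext i j
  rw [Matrix.mul_apply, Matrix.of_apply]
  by_cases hi : (i : ℕ) < k
  · rw [if_pos hi, Finset.sum_eq_single i]
    · rw [ee_apply_lt k 0 hi hi, if_pos rfl, one_mul]
    · intro l _ hl
      by_cases hlk : (l : ℕ) < k
      · rw [ee_apply_lt k 0 hi hlk, if_neg (Ne.symm hl), zero_mul]
      · rw [ee_apply_col_ge k 0 i l hlk, zero_mul]
    · intro h; exact absurd (Finset.mem_univ i) h
  · rw [if_neg hi]
    refine Finset.sum_eq_zero fun l _ => ?_
    by_cases hlk : (l : ℕ) < k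
    · rw [ee_apply_low k 0 hi hlk]; simp
    · rw [ee_apply_col_ge k 0 i l hlk, zero_mul]

lemma hmul_Ee0 (k : ℕ) (M : Matrix (Fin n) (Fin n) D) :
    M * Ee k 0 = Matrix.of (fun (i j : Fin n) => if (j : ℕ) < k then M i j else 0) := by
  ext i j
  rw [Matrix.mul_apply, Matrix.of_apply]
  by_cases hj : (j : ℕ) < k
  · rw [if_pos hj, Finset.sum_eq_single j]
    · rw [ee_apply_lt k 0 hj hj, if_pos rfl, mul_one]
    · intro l _ hl
      by_cases hlk : (l : ℕ) < k
      · rw [ee_apply_lt k 0 hlk hj, if_neg hl, mul_zero]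
      · rw [ee_apply_low k 0 hlk hj]; simp
    · intro h; exact absurd (Finset.mem_univ j) h
  · rw [if_neg hj]
    refine Finset.sum_eq_zero fun l _ => ?_
    rw [ee_apply_col_ge k 0 l j hj, mul_zero]

lemma fix_all {k : ℕ} (hk1 : 0 < k) (hkn : k < n)
    (g : RingAut (Matrix (Fin n) (Fin n) D))
    (Hfix : ∀ T : Matrix (Fin n) (Fin n) D, g (Ee k T) = Ee k T) :
    ∀ M : Matrix (Fin n) (Fin n) D, g M = M := by
  set p0 : Fin n := ⟨0, lt_trans hk1 hkn⟩ with hp0def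
  set q0 : Fin n := ⟨k, hkn⟩ with hq0def
  have hp0 : (p0 : ℕ) < k := hk1
  have hq0 : ¬ (q0 : ℕ) < k := by simp [hq0def]
  -- lower-left supported matrices are fixed
  have fixN : ∀ N : Matrix (Fin n) (Fin n) D,
      (∀ i j : Fin n, ((i : ℕ) < k ∨ ¬ (j : ℕ) < k) → N i j = 0) → g N = N := by
    intro N hsupp
    have hNrep : Ee k N - Ee k 0 = N := by
      ext i j
      show Ee k N i j - Ee k 0 i j = N i j
      by_cases hj : (j : ℕ) < k
      · by_cases hi : (i : ℕ) < k
        · rw [ee_apply_lt k N hi hj, ee_apply_lt k 0 hi hj, sub_self,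
            hsupp i j (Or.inl hi)]
        · rw [ee_apply_low k N hi hj, ee_apply_low k 0 hi hj]; simp
      · rw [ee_apply_col_ge k N i j hj, ee_apply_col_ge k 0 i j hj,
          hsupp i j (Or.inr hj), sub_self]
    calc g N = g (Ee k N - Ee k 0) := by rw [hNrep]
      _ = g (Ee k N) - g (Ee k 0) := map_sub g _ _
      _ = Ee k N - Ee k 0 := by rw [Hfix, Hfix]
      _ = N := hNrep
  have fixBL : ∀ (a b : Fin n) (d : D), ¬ (a : ℕ) < k → (b : ℕ) < k →
      g (Matrix.single a b d) = Matrix.single a b d := by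
    intro a b d ha hb
    apply fixN
    intro i j hij
    by_cases h : a = i ∧ b = j
    · obtain ⟨rfl, rfl⟩ := h
      rcases hij with h1 | h1
      · exact absurd h1 ha
      · exact absurd hb h1
    · exact Matrix.single_apply_of_ne _ _ _ _ _ h
  -- top-left block
  have stepTL : ∀ (d : D) (p p' : Fin n), (p : ℕ) < k → (p' : ℕ) < k →
      g (Matrix.single p p' d) = Matrix.single p p' d := by
    intro d p p' hp hp'
    set Z := g (Matrix.single p p' d) with hZ
    have hrows_ge : ∀ i j : Fin n, ¬ (i : ℕ) < k → Z i j = 0 := by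
      have h1 : Ee k 0 * Matrix.single p p' d = Matrix.single p p' d := by
        rw [hEe0_mul]
        ext i j
        rw [Matrix.of_apply]
        by_cases hi : (i : ℕ) < k
        · rw [if_pos hi]
        · rw [if_neg hi]
          symm
          exact Matrix.single_apply_of_row_ne (Fin.ne_of_val_ne (by omega)) _ _ _
      have h2 : Ee k 0 * Z = Z := by
        have := congrArg g h1
        rwa [_root_.map_mul, Hfix 0] at this
      intro i j hi
      calc Z i j = ((Ee k 0 * Z : Matrix (Fin n) (Fin n) D)) i j := by rw [h2]
        _ = 0 := by rw [hEe0_mul, Matrix.of_apply, if_neg hi]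
    have hrows_lt : ∀ p'' : Fin n, (p'' : ℕ) < k → ∀ j : Fin n,
        Z p'' j = if p = p'' ∧ p' = j then d else 0 := by
      intro p'' hp'' j
      by_cases h : p'' = p
      · subst h
        have hid : Matrix.single q0 p'' (1 : D) * Matrix.single p'' p' d
            = Matrix.single q0 p' d := by
          rw [Matrix.single_mul_single_same, one_mul]
        have h2 : Matrix.single q0 p'' (1 : D) * Z = Matrix.single q0 p' d := by
          have := congrArg g hid
          rwa [_root_.map_mul, fixBL q0 p'' 1 hq0 hp'', fixBL q0 p' d hq0 hp'] at this
        have h4 := congrFun (congrFun h2 q0) j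
        rw [Matrix.single_mul_apply_same, one_mul, std_apply] at h4
        rw [h4]
        simp
      · have hid : Matrix.single q0 p'' (1 : D) * Matrix.single p p' d
            = 0 := Matrix.single_mul_single_of_ne _ _ _ _ h _
        have h2 : Matrix.single q0 p'' (1 : D) * Z = 0 := by
          have := congrArg g hid
          rwa [_root_.map_mul, fixBL q0 p'' 1 hq0 hp'', map_zero] at this
        have h4 := congrFun (congrFun h2 q0) j
        rw [Matrix.single_mul_apply_same, one_mul] at h4
        rw [h4, if_neg (fun hc => h (hc.1.symm)), Matrix.zero_apply]
    ext i j
    by_cases hi : (i : ℕ) < k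
    · rw [hrows_lt i hi j, std_apply]
    · rw [hrows_ge i j hi]
      symm
      exact Matrix.single_apply_of_row_ne (Fin.ne_of_val_ne (by omega)) _ _ _
  -- top-right block
  have stepTR : ∀ (d : D) (p q' : Fin n), (p : ℕ) < k → ¬ (q' : ℕ) < k →
      g (Matrix.single p q' d) = Matrix.single p q' d := by
    intro d p q' hp hq'
    set Y := g (Matrix.single p q' d) with hY
    have hrows_ge : ∀ i j : Fin n, ¬ (i : ℕ) < k → Y i j = 0 := by
      have h1 : Ee k 0 * Matrix.single p q' d = Matrix.single p q' d := by
        rw [hEe0_mul]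
        ext i j
        rw [Matrix.of_apply]
        by_cases hi : (i : ℕ) < k
        · rw [if_pos hi]
        · rw [if_neg hi]
          symm
          exact Matrix.single_apply_of_row_ne (Fin.ne_of_val_ne (by omega)) _ _ _
      have h2 : Ee k 0 * Y = Y := by
        have := congrArg g h1
        rwa [_root_.map_mul, Hfix 0] at this
      intro i j hi
      calc Y i j = ((Ee k 0 * Y : Matrix (Fin n) (Fin n) D)) i j := by rw [h2]
        _ = 0 := by rw [hEe0_mul, Matrix.of_apply, if_neg hi]
    have hcols_lt : ∀ i j : Fin n, (j : ℕ) < k → Y i j = 0 := by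
      have h1 : Matrix.single p q' d * Ee k 0 = 0 := by
        rw [hmul_Ee0]
        ext i j
        rw [Matrix.of_apply, Matrix.zero_apply]
        by_cases hj : (j : ℕ) < k
        · rw [if_pos hj]
          exact Matrix.single_apply_of_col_ne _ _ (Fin.ne_of_val_ne (by omega)) _
        · rw [if_neg hj]
      have h2 : Y * Ee k 0 = 0 := by
        have := congrArg g h1
        rwa [_root_.map_mul, Hfix 0, map_zero] at this
      intro i j hj
      have h4 := congrFun (congrFun h2 i) j
      rwa [hmul_Ee0, Matrix.of_apply, if_pos hj, Matrix.zero_apply] at h4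
    have hcols_ge : ∀ (i q'' : Fin n), ¬ (q'' : ℕ) < k →
        Y i q'' = if p = i ∧ q' = q'' then d else 0 := by
      intro i q'' hq''
      by_cases h : q' = q''
      · subst h
        have hid : Matrix.single p q' d * Matrix.single q' p0 (1 : D)
            = Matrix.single p p0 d := by
          rw [Matrix.single_mul_single_same, mul_one]
        have h2 : Y * Matrix.single q' p0 (1 : D) = Matrix.single p p0 d := by
          have := congrArg g hid
          rwa [_root_.map_mul, fixBL q' p0 1 hq'' hp0, stepTL d p p0 hp hp0] at this
        have h4 := congrFun (congrFun h2 i) p0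
        rw [Matrix.mul_single_apply_same, mul_one, std_apply] at h4
        rw [h4]
        simp
      · have hid : Matrix.single p q' d * Matrix.single q'' p0 (1 : D)
            = 0 := Matrix.single_mul_single_of_ne _ _ _ _ h _
        have h2 : Y * Matrix.single q'' p0 (1 : D) = 0 := by
          have := congrArg g hid
          rwa [_root_.map_mul, fixBL q'' p0 1 hq'' hp0, map_zero] at this
        have h4 := congrFun (congrFun h2 i) p0
        rw [Matrix.mul_single_apply_same, mul_one] at h4
        rw [h4, if_neg (fun hc => h hc.2), Matrix.zero_apply]
    ext i j
    by_cases hj : (j : ℕ) < k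
    · rw [hcols_lt i j hj]
      symm
      exact Matrix.single_apply_of_col_ne _ _ (Fin.ne_of_val_ne (by omega)) _
    · rw [hcols_ge i j hj, std_apply]
  -- bottom-right block
  have stepBR : ∀ (d : D) (q q' : Fin n), ¬ (q : ℕ) < k → ¬ (q' : ℕ) < k →
      g (Matrix.single q q' d) = Matrix.single q q' d := by
    intro d q q' hq hq'
    set W := g (Matrix.single q q' d) with hW
    have hrows_lt : ∀ i j : Fin n, (i : ℕ) < k → W i j = 0 := by
      have h1 : Ee k 0 * Matrix.single q q' d = 0 := by
        rw [hEe0_mul]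
        ext i j
        rw [Matrix.of_apply, Matrix.zero_apply]
        by_cases hi : (i : ℕ) < k
        · rw [if_pos hi]
          exact Matrix.single_apply_of_row_ne (Fin.ne_of_val_ne (by omega)) _ _ _
        · rw [if_neg hi]
      have h2 : Ee k 0 * W = 0 := by
        have := congrArg g h1
        rwa [_root_.map_mul, Hfix 0, map_zero] at this
      intro i j hi
      have h4 := congrFun (congrFun h2 i) j
      rwa [hEe0_mul, Matrix.of_apply, if_pos hi, Matrix.zero_apply] at h4
    have hrows_ge : ∀ (q'' : Fin n) (j : Fin n), ¬ (q'' : ℕ) < k →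
        W q'' j = if q = q'' ∧ q' = j then d else 0 := by
      intro q'' j hq''
      by_cases h : q = q''
      · subst h
        have hid : Matrix.single p0 q (1 : D) * Matrix.single q q' d
            = Matrix.single p0 q' d := by
          rw [Matrix.single_mul_single_same, one_mul]
        have h2 : Matrix.single p0 q (1 : D) * W = Matrix.single p0 q' d := by
          have := congrArg g hid
          rwa [_root_.map_mul, stepTR 1 p0 q hp0 hq'', stepTR d p0 q' hp0 hq'] at this
        have h4 := congrFun (congrFun h2 p0) j
        rw [Matrix.single_mul_apply_same, one_mul, std_apply] at h4
        rw [h4]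
        simp
      · have hid : Matrix.single p0 q'' (1 : D) * Matrix.single q q' d
            = 0 := Matrix.single_mul_single_of_ne _ _ _ _ (Ne.symm h) _
        have h2 : Matrix.single p0 q'' (1 : D) * W = 0 := by
          have := congrArg g hid
          rwa [_root_.map_mul, stepTR 1 p0 q'' hp0 hq'', map_zero] at this
        have h4 := congrFun (congrFun h2 p0) j
        rw [Matrix.single_mul_apply_same, one_mul] at h4
        rw [h4, if_neg (fun hc => h hc.1), Matrix.zero_apply]
    ext i j
    by_cases hi : (i : ℕ) < k
    · rw [hrows_lt i j hi]
      symm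
      exact Matrix.single_apply_of_row_ne (Fin.ne_of_val_ne (by omega)) _ _ _
    · rw [hrows_ge i j hi, std_apply]
  -- conclude
  intro M
  have hstd : ∀ (i j : Fin n),
      g (Matrix.single i j (M i j)) = Matrix.single i j (M i j) := by
    intro i j
    by_cases hi : (i : ℕ) < k <;> by_cases hj : (j : ℕ) < k
    · exact stepTL _ _ _ hi hj
    · exact stepTR _ _ _ hi hj
    · exact fixBL _ _ _ hi hj
    · exact stepBR _ _ _ hi hj
  conv_lhs => rw [Matrix.matrix_eq_sum_single M]
  rw [map_sum]
  conv_rhs => rw [Matrix.matrix_eq_sum_single M]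
  refine Finset.sum_congr rfl fun i _ => ?_
  rw [map_sum]
  exact Finset.sum_congr rfl fun j _ => hstd i j

end Matrices

section Span

variable {D : Type*} [DivisionRing D] {n : ℕ}

lemma mem_span_singleton_op {R : Type*} [Ring R] {E M : R} :
    M ∈ Submodule.span Rᵐᵒᵖ {E} ↔ ∃ N : R, M = E * N := by
  rw [Submodule.mem_span_singleton]
  constructor
  · rintro ⟨a, rfl⟩
    exact ⟨a.unop, (MulOpposite.smul_eq_mul_unop _ _).symm.symm⟩
  · rintro ⟨N, rfl⟩
    refine ⟨MulOpposite.op N, ?_⟩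
    rw [MulOpposite.smul_eq_mul_unop, MulOpposite.unop_op]

lemma colSpan_span_Ee {k : ℕ} (hkn : k ≤ n) (T : Matrix (Fin n) (Fin n) D) :
    colSpan (Submodule.span (Matrix (Fin n) (Fin n) D)ᵐᵒᵖ {Ee k T})
      = Submodule.span Dᵐᵒᵖ
          (Set.range fun j : Fin k => fun i : Fin n => Ee k T i (Fin.castLE hkn j)) := by
  apply le_antisymm
  · rw [colSpan, Submodule.span_le]
    rintro v ⟨M, hM, j, rfl⟩
    rw [SetLike.mem_coe]
    obtain ⟨N, rfl⟩ := mem_span_singleton_op.mp hM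
    have hv : (fun i => (Ee k T * N) i j)
        = ∑ l : Fin n, MulOpposite.op (N l j) • (fun i => Ee k T i l) := by
      funext i
      rw [Finset.sum_apply, Matrix.mul_apply]
      refine Finset.sum_congr rfl fun l _ => ?_
      rw [Pi.smul_apply, MulOpposite.smul_eq_mul_unop, MulOpposite.unop_op]
    rw [hv]
    refine Submodule.sum_mem _ fun l _ => Submodule.smul_mem _ _ ?_
    by_cases hl : (l : ℕ) < k
    · apply Submodule.subset_span
      exact ⟨⟨(l : ℕ), hl⟩, rfl⟩
    · have hz : (fun i => Ee k T i l) = (0 : Fin n → D) := by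
        funext i; exact ee_apply_col_ge k T i l hl
      rw [hz]
      exact Submodule.zero_mem _
  · rw [Submodule.span_le]
    rintro v ⟨j, rfl⟩
    rw [SetLike.mem_coe, colSpan]
    apply Submodule.subset_span
    exact ⟨Ee k T, Submodule.mem_span_singleton_self _, Fin.castLE hkn j, rfl⟩

lemma finrank_colSpan_span {k : ℕ} (hkn : k ≤ n) (T : Matrix (Fin n) (Fin n) D) :
    Module.finrank Dᵐᵒᵖ
      (colSpan (Submodule.span (Matrix (Fin n) (Fin n) D)ᵐᵒᵖ {Ee k T})) = k := by
  rw [colSpan_span_Ee hkn T]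
  have hli : LinearIndependent Dᵐᵒᵖ
      (fun j : Fin k => fun i : Fin n => Ee k T i (Fin.castLE hkn j)) := by
    rw [Fintype.linearIndependent_iff]
    intro a ha j0
    have h := congrFun ha (Fin.castLE hkn j0)
    rw [Finset.sum_apply, Pi.zero_apply] at h
    have hterm : ∀ j : Fin k,
        (a j • fun i : Fin n => Ee k T i (Fin.castLE hkn j)) (Fin.castLE hkn j0)
          = if j = j0 then (a j0).unop else 0 := by
      intro j
      rw [Pi.smul_apply, MulOpposite.smul_eq_mul_unop]
      have hrow : ((Fin.castLE hkn j0 : Fin n) : ℕ) < k := j0.isLt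
      have hcol : ((Fin.castLE hkn j : Fin n) : ℕ) < k := j.isLt
      by_cases hj : j = j0
      · subst hj
        rw [ee_apply_lt k T hrow hcol, if_pos rfl, one_mul, if_pos rfl]
      · rw [ee_apply_lt k T hrow hcol,
          if_neg (fun hc => hj (Fin.castLE_injective hkn hc).symm), zero_mul, if_neg hj]
    rw [Finset.sum_congr rfl (fun j _ => hterm j),
      Finset.sum_ite_eq' Finset.univ j0 (fun _ => (a j0).unop),
      if_pos (Finset.mem_univ j0)] at h
    exact MulOpposite.unop_injective (by rw [h, MulOpposite.unop_zero])
  rw [finrank_span_eq_card hli, Fintype.card_fin]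

lemma img_eqs {R : Type*} [Ring R] (E : R) (hE : E * E = E) (g : RingAut R)
    (h : ⇑g '' ((Submodule.span Rᵐᵒᵖ {E} : Submodule Rᵐᵒᵖ R) : Set R)
        = ((Submodule.span Rᵐᵒᵖ {E} : Submodule Rᵐᵒᵖ R) : Set R)) :
    E * g E = g E ∧ g E * E = E := by
  have hEmem : E ∈ Submodule.span Rᵐᵒᵖ {E} := Submodule.mem_span_singleton_self E
  constructor
  · have h1 : g E ∈ Submodule.span Rᵐᵒᵖ {E} := by
      have h1' : g E ∈ ⇑g '' ((Submodule.span Rᵐᵒᵖ {E} : Submodule Rᵐᵒᵖ R) : Set R) :=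
        Set.mem_image_of_mem _ hEmem
      rw [h] at h1'
      exact h1'
    obtain ⟨N, hN⟩ := mem_span_singleton_op.mp h1
    rw [hN, ← mul_assoc, hE]
  · have h2 : E ∈ ⇑g '' ((Submodule.span Rᵐᵒᵖ {E} : Submodule Rᵐᵒᵖ R) : Set R) := by
      rw [h]; exact hEmem
    obtain ⟨Y, hY, hgY⟩ := h2
    obtain ⟨N, hN⟩ := mem_span_singleton_op.mp hY
    have hrep : E = g E * g N := by rw [← _root_.map_mul, ← hN, hgY]
    calc g E * E = g E * (g E * g N) := by rw [← hrep]
      _ = (g E * g E) * g N := by rw [mul_assoc]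
      _ = g E * g N := by rw [← _root_.map_mul g E E, hE]
      _ = E := hrep.symm

lemma exists_bad {k : ℕ} (hk1 : 0 < k) (hkn : k < n)
    (g : RingAut (Matrix (Fin n) (Fin n) D)) (hg : g ≠ 1) :
    ∃ T : Matrix (Fin n) (Fin n) D,
      ¬ (Ee k T * g (Ee k T) = g (Ee k T) ∧ g (Ee k T) * Ee k T = Ee k T) := by
  by_contra hcon
  rw [not_exists] at hcon
  have H : ∀ T : Matrix (Fin n) (Fin n) D,
      Ee k T * g (Ee k T) = g (Ee k T) ∧ g (Ee k T) * Ee k T = Ee k T :=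
    fun T => not_not.mp (hcon T)
  have hfix := fix_idem k g H
  have hall := fix_all hk1 hkn g hfix
  exact hg (RingEquiv.ext fun M => hall M)

end Span

section Rep

variable {V : Type*} [AddCommGroup V] [Module ℚ V]

lemma rep_eval_sum {ι : Type*} (S : Finset ι)
    (p : ι → Polynomial ℚ) (w : ι → V) (M : ℕ) (hdeg : ∀ j ∈ S, (p j).natDegree < M) (t : ℚ) :
    ∑ j ∈ S, (p j).eval t • w j
      = ∑ i ∈ Finset.range M, t ^ i • ∑ j ∈ S, (p j).coeff i • w j := by
  symm
  calc ∑ i ∈ Finset.range M, t ^ i • ∑ j ∈ S, (p j).coeff i • w j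
      = ∑ i ∈ Finset.range M, ∑ j ∈ S, t ^ i • ((p j).coeff i • w j) := by
        exact Finset.sum_congr rfl fun i _ => Finset.smul_sum
    _ = ∑ j ∈ S, ∑ i ∈ Finset.range M, t ^ i • ((p j).coeff i • w j) := Finset.sum_comm
    _ = ∑ j ∈ S, (p j).eval t • w j := by
        refine Finset.sum_congr rfl fun j hj => ?_
        rw [Polynomial.eval_eq_sum_range' (hdeg j hj), Finset.sum_smul]
        exact Finset.sum_congr rfl fun i _ => by rw [smul_smul, mul_comm]

lemma rep_eval_single (p : Polynomial ℚ) (w : V) (M : ℕ) (hdeg : p.natDegree < M) (t : ℚ) :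
    p.eval t • w = ∑ i ∈ Finset.range M, t ^ i • (p.coeff i • w) := by
  rw [Polynomial.eval_eq_sum_range' hdeg, Finset.sum_smul]
  exact Finset.sum_congr rfl fun i _ => by rw [smul_smul, mul_comm]

end Rep

section BLpart

variable {D : Type*} [DivisionRing D] [CharZero D] {n : ℕ}

/-- the lower-left truncation, as a `ℚ`-linear map -/
def BLlin (k : ℕ) : Matrix (Fin n) (Fin n) D →ₗ[ℚ] Matrix (Fin n) (Fin n) D where
  toFun A := Matrix.of fun (i j : Fin n) => if (j : ℕ) < k ∧ ¬ (i : ℕ) < k then A i j else 0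
  map_add' A B := by
    ext i j
    simp only [Matrix.of_apply, Matrix.add_apply]
    split_ifs <;> simp
  map_smul' q A := by
    ext i j
    simp only [Matrix.of_apply, Matrix.smul_apply, RingHom.id_apply]
    split_ifs <;> simp

lemma ee_split (k : ℕ) (T : Matrix (Fin n) (Fin n) D) :
    Ee k T = Ee k 0 + BLlin k T := by
  ext i j
  rw [Matrix.add_apply]
  show Ee k T i j = Ee k 0 i j + (if (j : ℕ) < k ∧ ¬ (i : ℕ) < k then T i j else 0)
  by_cases hj : (j : ℕ) < k
  · by_cases hi : (i : ℕ) < k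
    · rw [ee_apply_lt k T hi hj, ee_apply_lt k 0 hi hj,
        if_neg (show ¬ ((j : ℕ) < k ∧ ¬ (i : ℕ) < k) from fun hc => hc.2 hi), add_zero]
    · rw [ee_apply_low k T hi hj, ee_apply_low k 0 hi hj, if_pos ⟨hj, hi⟩]
      simp
  · rw [ee_apply_col_ge k T i j hj, ee_apply_col_ge k 0 i j hj,
      if_neg (show ¬ ((j : ℕ) < k ∧ ¬ (i : ℕ) < k) from fun hc => hj hc.1), add_zero]

end BLpart

end S10

/-- Let `D` be a division ring finite-dimensional over `ℚ`, `n ≥ 2`, `G` a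
finite subgroup of the automorphism group of `M_n(D)` and `1 ≤ k ≤ n-1`.  There are infinitely
many right ideals `I` of `M_n(D)` whose associated right subspace `V_I` has dimension `k` and
which are stable under no non-trivial element of `G`. -/
theorem infinitely_many_unstable_ideals
    {D : Type*} [DivisionRing D] [CharZero D] [FiniteDimensional ℚ D]
    {n : ℕ} (hn : 2 ≤ n)
    (G : Subgroup (RingAut (Matrix (Fin n) (Fin n) D))) (hG : (G : Set (RingAut (Matrix (Fin n) (Fin n) D))).Finite)
    (k : ℕ) (hk1 : 1 ≤ k) (hk2 : k ≤ n - 1) :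
    {I : Submodule (Matrix (Fin n) (Fin n) D)ᵐᵒᵖ (Matrix (Fin n) (Fin n) D) |
      Module.finrank Dᵐᵒᵖ (colSpan I) = k ∧
      ∀ g ∈ G, g ≠ 1 →
        ⇑g '' (I : Set (Matrix (Fin n) (Fin n) D)) ≠ (I : Set (Matrix (Fin n) (Fin n) D))
      }.Infinite := by

  classical
  have hkn : k < n := by omega
  have h0n : 0 < n := by omega
  -- nontrivial elements of G
  set s : Finset (RingAut (Matrix (Fin n) (Fin n) D)) := hG.toFinset.erase 1 with hs
  set m := s.card with hm
  set e : {x // x ∈ s} ≃ Fin m := s.equivFin with he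
  set gg : Fin m → RingAut (Matrix (Fin n) (Fin n) D) := fun i => ((e.symm i : {x // x ∈ s}) : RingAut (Matrix (Fin n) (Fin n) D)) with hgg
  have hgg_ne : ∀ i, gg i ≠ 1 := fun i => (Finset.mem_erase.mp (e.symm i).2).1
  have hgg_surj : ∀ g ∈ G, g ≠ 1 → ∃ i, gg i = g := by
    intro g hgG hgne
    have hgs : g ∈ s := Finset.mem_erase.mpr ⟨hgne, hG.mem_toFinset.mpr hgG⟩
    refine ⟨e ⟨g, hgs⟩, ?_⟩
    show ((e.symm (e ⟨g, hgs⟩) : {x // x ∈ s}) : RingAut (Matrix (Fin n) (Fin n) D)) = g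
    rw [Equiv.symm_apply_apply]
  -- witnesses
  have hwit : ∀ i : Fin m, ∃ T : Matrix (Fin n) (Fin n) D,
      ¬ (S10.Ee k T * (gg i) (S10.Ee k T) = (gg i) (S10.Ee k T) ∧
        (gg i) (S10.Ee k T) * S10.Ee k T = S10.Ee k T) :=
    fun i => S10.exists_bad hk1 hkn (gg i) (hgg_ne i)
  choose W hW using hwit
  -- interpolation polynomials
  set node : Fin m → ℚ := fun j => ((j : ℕ) : ℚ) with hnode
  have hnode_inj : Function.Injective node := by
    intro a b hab
    exact Fin.val_injective (Nat.cast_injective hab)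
  set ℓp : Fin m → Polynomial ℚ := fun j =>
    Polynomial.C (∏ l ∈ Finset.univ.erase j, (node j - node l)⁻¹) *
      ∏ l ∈ Finset.univ.erase j, (Polynomial.X - Polynomial.C (node l)) with hℓp
  set μp : Polynomial ℚ := Polynomial.X * ∏ l : Fin m, (Polynomial.X - Polynomial.C (node l))
    with hμp
  have hℓ_self : ∀ j, (ℓp j).eval (node j) = 1 := by
    intro j
    rw [hℓp]
    simp only [Polynomial.eval_mul, Polynomial.eval_C, Polynomial.eval_prod,
      Polynomial.eval_sub, Polynomial.eval_X]
    rw [← Finset.prod_mul_distrib]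
    refine Finset.prod_eq_one fun l hl => inv_mul_cancel₀ (sub_ne_zero.mpr ?_)
    intro hc
    exact (Finset.mem_erase.mp hl).1 (hnode_inj hc).symm
  have hℓ_ne : ∀ (j l : Fin m), l ≠ j → (ℓp j).eval (node l) = 0 := by
    intro j l hl
    rw [hℓp]
    simp only [Polynomial.eval_mul, Polynomial.eval_C, Polynomial.eval_prod]
    have hz : (∏ l' ∈ Finset.univ.erase j,
        Polynomial.eval (node l) (Polynomial.X - Polynomial.C (node l'))) = 0 :=
      Finset.prod_eq_zero (Finset.mem_erase.mpr ⟨hl, Finset.mem_univ l⟩) (by simp)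
    rw [hz, mul_zero]
  have hμ_node : ∀ j : Fin m, μp.eval (node j) = 0 := by
    intro j
    have hz : (∏ l ∈ (Finset.univ : Finset (Fin m)),
        Polynomial.eval (node j) (Polynomial.X - Polynomial.C (node l))) = 0 :=
      Finset.prod_eq_zero (Finset.mem_univ j) (by simp)
    rw [hμp, Polynomial.eval_mul, Polynomial.eval_prod, hz, mul_zero]
  have hℓ_deg : ∀ j, (ℓp j).natDegree < m + 1 := by
    intro j
    have h1 : (ℓp j).natDegree ≤ (∏ l ∈ Finset.univ.erase j,
        (Polynomial.X - Polynomial.C (node l))).natDegree := Polynomial.natDegree_C_mul_le _ _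
    have h2 : (∏ l ∈ Finset.univ.erase j, (Polynomial.X - Polynomial.C (node l))).natDegree
        ≤ ∑ l ∈ Finset.univ.erase j, (Polynomial.X - Polynomial.C (node l)).natDegree :=
      Polynomial.natDegree_prod_le _ _
    have h3 : ∑ l ∈ Finset.univ.erase j, (Polynomial.X - Polynomial.C (node l)).natDegree
        ≤ ∑ l ∈ Finset.univ.erase j, 1 :=
      Finset.sum_le_sum fun l _ => Polynomial.natDegree_X_sub_C_le _
    have h4 : (∑ l ∈ Finset.univ.erase j, 1) = (Finset.univ.erase j).card :=
      (Finset.card_eq_sum_ones _).symm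
    have h5 : (Finset.univ.erase j).card ≤ m := by
      calc (Finset.univ.erase j).card ≤ (Finset.univ : Finset (Fin m)).card :=
            Finset.card_le_card (Finset.erase_subset _ _)
        _ = m := by rw [Finset.card_univ, Fintype.card_fin]
    omega
  have hprod_monic : (∏ l : Fin m, (Polynomial.X - Polynomial.C (node l))).Monic :=
    Polynomial.monic_prod_of_monic _ _ fun l _ => Polynomial.monic_X_sub_C _
  have hμ_monic : μp.Monic := Polynomial.monic_X.mul hprod_monic
  have hμ_deg : μp.natDegree = m + 1 := by
    have hsum : (∑ l : Fin m, (Polynomial.X - Polynomial.C (node l)).natDegree) = m := by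
      simp [Polynomial.natDegree_X_sub_C]
    rw [hμp, Polynomial.Monic.natDegree_mul Polynomial.monic_X hprod_monic,
      Polynomial.natDegree_X, Polynomial.natDegree_prod _ _
        (fun l _ => Polynomial.X_sub_C_ne_zero (node l)), hsum]
    omega
  -- the curve of parameters
  set r0 : Fin n := ⟨k, hkn⟩ with hr0
  set p0 : Fin n := ⟨0, h0n⟩ with hp0
  set Δ : Matrix (Fin n) (Fin n) D := Matrix.single r0 p0 (1 : D) with hΔ
  set curve : ℚ → Matrix (Fin n) (Fin n) D := fun t =>
    (∑ j : Fin m, (ℓp j).eval t • W j) + μp.eval t • Δ with hcurve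
  have hcurve_node : ∀ j : Fin m, curve (node j) = W j := by
    intro j
    rw [hcurve]
    show (∑ j' : Fin m, (ℓp j').eval (node j) • W j') + μp.eval (node j) • Δ = W j
    rw [hμ_node j, zero_smul, add_zero, Finset.sum_eq_single j]
    · rw [hℓ_self j, one_smul]
    · intro l _ hl
      rw [hℓ_ne l j (Ne.symm hl), zero_smul]
    · intro h; exact absurd (Finset.mem_univ j) h
  -- idempotent family along the curve
  set EC : ℚ → Matrix (Fin n) (Fin n) D := fun t => S10.Ee k (curve t) with hECdef
  have hECrep : ∀ t, EC t = S10.Ee k 0 +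
      ((∑ j : Fin m, (ℓp j).eval t • (S10.BLlin k (W j) : Matrix (Fin n) (Fin n) D))
        + μp.eval t • (S10.BLlin k Δ : Matrix (Fin n) (Fin n) D)) := by
    intro t
    show S10.Ee k (curve t) = _
    rw [S10.ee_split k (curve t)]
    congr 1
    rw [hcurve]
    show (S10.BLlin k) ((∑ j : Fin m, (ℓp j).eval t • W j) + μp.eval t • Δ) = _
    rw [map_add, map_sum, LinearMap.map_smul]
    congr 1
    exact Finset.sum_congr rfl fun j _ => by rw [LinearMap.map_smul]
  have hPF_EC : S10.IsPF EC :=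
    S10.isPF_congr hECrep
      (S10.isPF_add (S10.isPF_const _)
        (S10.isPF_add
          (S10.isPF_finsum Finset.univ _ (fun j _ => S10.isPF_evalsmul (ℓp j) _))
          (S10.isPF_evalsmul μp _)))
  have hgECrep : ∀ (i : Fin m) (t : ℚ), (gg i) (EC t) = (gg i) (S10.Ee k 0) +
      ((∑ j : Fin m, (ℓp j).eval t • (gg i) (S10.BLlin k (W j)))
        + μp.eval t • (gg i) (S10.BLlin k Δ)) := by
    intro i t
    rw [hECrep t, map_add, map_add, map_sum]
    congr 1
    congr 1
    · exact Finset.sum_congr rfl fun j _ => map_rat_smul (gg i) _ _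
    · exact map_rat_smul (gg i) _ _
  have hPF_gEC : ∀ i : Fin m, S10.IsPF (fun t => (gg i) (EC t)) := fun i =>
    S10.isPF_congr (hgECrep i)
      (S10.isPF_add (S10.isPF_const _)
        (S10.isPF_add
          (S10.isPF_finsum Finset.univ _ (fun j _ => S10.isPF_evalsmul (ℓp j) _))
          (S10.isPF_evalsmul μp _)))
  -- bad parameter sets
  set Z : Fin m → Set ℚ := fun i => {t | EC t * (gg i) (EC t) - (gg i) (EC t) = 0 ∧
      (gg i) (EC t) * EC t - EC t = 0} with hZdef
  have hZfin : ∀ i, (Z i).Finite := by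
    intro i
    by_contra hninf
    have hninf : (Z i).Infinite := hninf
    have hD1 : ∀ t, EC t * (gg i) (EC t) - (gg i) (EC t) = 0 :=
      S10.isPF_zero_everywhere
        (S10.isPF_sub (S10.isPF_mul hPF_EC (hPF_gEC i)) (hPF_gEC i))
        (Set.Infinite.mono (fun t ht => ht.1) hninf)
    have hD2 : ∀ t, (gg i) (EC t) * EC t - EC t = 0 :=
      S10.isPF_zero_everywhere
        (S10.isPF_sub (S10.isPF_mul (hPF_gEC i) hPF_EC) hPF_EC)
        (Set.Infinite.mono (fun t ht => ht.2) hninf)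
    apply hW i
    have hEW : EC (node i) = S10.Ee k (W i) := by
      show S10.Ee k (curve (node i)) = _
      rw [hcurve_node i]
    constructor
    · have h := hD1 (node i); rw [hEW] at h; exact sub_eq_zero.mp h
    · have h := hD2 (node i); rw [hEW] at h; exact sub_eq_zero.mp h
  set good : Set ℚ := (⋃ i, Z i)ᶜ with hgooddef
  have hgood_inf : good.Infinite :=
    Set.Finite.infinite_compl (Set.finite_iUnion hZfin)
  -- membership of the ideals in the target set
  have hmem : ∀ t ∈ good,
      (Submodule.span (Matrix (Fin n) (Fin n) D)ᵐᵒᵖ {EC t}) ∈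
      {I : Submodule (Matrix (Fin n) (Fin n) D)ᵐᵒᵖ (Matrix (Fin n) (Fin n) D) |
        Module.finrank Dᵐᵒᵖ (colSpan I) = k ∧
        ∀ g ∈ G, g ≠ 1 →
          ⇑g '' (I : Set (Matrix (Fin n) (Fin n) D)) ≠ (I : Set (Matrix (Fin n) (Fin n) D))} := by
    intro t ht
    refine ⟨S10.finrank_colSpan_span hkn.le (curve t), ?_⟩
    intro g hgG hgne himg
    obtain ⟨i, hi⟩ := hgg_surj g hgG hgne
    rw [← hi] at himg
    have heqs := S10.img_eqs (EC t) (S10.ee_mul k (curve t) (curve t)) (gg i) himg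
    exact ht (Set.mem_iUnion.mpr
      ⟨i, ⟨sub_eq_zero_of_eq heqs.1, sub_eq_zero_of_eq heqs.2⟩⟩)
  -- the distinguished matrix entry, as a polynomial function of t
  set Fent : ℚ → D := fun t => curve t r0 p0 with hFentdef
  have hFent_eq : ∀ t, Fent t
      = (∑ j : Fin m, (ℓp j).eval t • (W j r0 p0)) + μp.eval t • (1 : D) := by
    intro t
    show curve t r0 p0 = _
    rw [hcurve]
    show ((∑ j : Fin m, (ℓp j).eval t • W j) + μp.eval t • Δ) r0 p0 = _
    simp only [Matrix.add_apply, Matrix.sum_apply, Matrix.smul_apply]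
    have hΔv : Δ r0 p0 = 1 := Matrix.single_apply_same _ _ _
    rw [hΔv]
  set cF : ℕ → D := fun i => (∑ j : Fin m, (ℓp j).coeff i • (W j r0 p0)) + μp.coeff i • (1 : D)
    with hcFdef
  have hrepF : ∀ t, Fent t = ∑ i ∈ Finset.range (m + 2), t ^ i • cF i := by
    intro t
    rw [hFent_eq t,
      S10.rep_eval_sum Finset.univ ℓp (fun j => W j r0 p0) (m + 2)
        (fun j _ => lt_trans (hℓ_deg j) (by omega)) t,
      S10.rep_eval_single μp (1 : D) (m + 2) (by omega) t,
      ← Finset.sum_add_distrib]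
    exact Finset.sum_congr rfl fun i _ => by rw [smul_add]
  have hcF_top : cF (m + 1) = 1 := by
    have h1 : ∀ j : Fin m, (ℓp j).coeff (m + 1) = 0 := fun j =>
      Polynomial.coeff_eq_zero_of_natDegree_lt (hℓ_deg j)
    have h2 : μp.coeff (m + 1) = 1 := by
      have h := hμ_monic.coeff_natDegree
      rwa [hμ_deg] at h
    show (∑ j : Fin m, (ℓp j).coeff (m + 1) • (W j r0 p0)) + μp.coeff (m + 1) • (1 : D) = 1
    rw [h2, one_smul, Finset.sum_eq_zero (fun j _ => by rw [h1 j, zero_smul]), zero_add]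
  have hfiber : ∀ c : D, {t : ℚ | Fent t = c}.Finite := by
    intro c
    by_contra hninf
    have hninf : {t : ℚ | Fent t = c}.Infinite := hninf
    set c' : ℕ → D := fun i => cF i - (if i = 0 then c else 0) with hc'def
    have hzero : ∀ t ∈ {t : ℚ | Fent t = c},
        ∑ i ∈ Finset.range (m + 2), t ^ i • c' i = 0 := by
      intro t ht
      have h3 : (∑ i ∈ Finset.range (m + 2), t ^ i • (if i = 0 then c else 0 : D)) = c := by
        have h4 : ∀ i ∈ Finset.range (m + 2), t ^ i • (if i = 0 then c else 0 : D)
            = if i = 0 then t ^ i • c else 0 := by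
          intro i _; split <;> simp
        rw [Finset.sum_congr rfl h4, Finset.sum_ite_eq' (Finset.range (m + 2)) 0
          (fun i => t ^ i • c), if_pos (Finset.mem_range.mpr (by omega))]
        simp
      have ht' : Fent t = c := ht
      calc ∑ i ∈ Finset.range (m + 2), t ^ i • c' i
          = (∑ i ∈ Finset.range (m + 2), t ^ i • cF i)
            - ∑ i ∈ Finset.range (m + 2), t ^ i • (if i = 0 then c else 0 : D) := by
            rw [← Finset.sum_sub_distrib]
            exact Finset.sum_congr rfl fun i _ => by rw [smul_sub]
        _ = Fent t - c := by rw [← hrepF t, h3]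
        _ = 0 := by rw [ht', sub_self]
    have hinf2 : {t : ℚ | ∑ i ∈ Finset.range (m + 2), t ^ i • c' i = 0}.Infinite :=
      Set.Infinite.mono (fun t ht => hzero t ht) hninf
    have hvan := S10.vanish_aux (m + 2) c' hinf2 (m + 1) (by omega)
    have : c' (m + 1) = cF (m + 1) := by
      show cF (m + 1) - (if m + 1 = 0 then c else 0) = cF (m + 1)
      rw [if_neg (Nat.succ_ne_zero m), sub_zero]
    rw [this, hcF_top] at hvan
    exact one_ne_zero hvan
  -- distinct parameters give distinct ideals (up to finite fibers)
  have hFent_inj : ∀ t t' : ℚ,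
      Submodule.span (Matrix (Fin n) (Fin n) D)ᵐᵒᵖ {EC t}
        = Submodule.span (Matrix (Fin n) (Fin n) D)ᵐᵒᵖ {EC t'} →
      Fent t' = Fent t := by
    intro t t' hsp
    have hmem1 : EC t' ∈ Submodule.span (Matrix (Fin n) (Fin n) D)ᵐᵒᵖ {EC t} := by
      rw [hsp]; exact Submodule.mem_span_singleton_self _
    obtain ⟨N, hN⟩ := S10.mem_span_singleton_op.mp hmem1
    set w : Fin n → D := fun l => N l p0 with hwdef
    have hcol : ∀ i : Fin n, EC t' i p0 = ∑ l : Fin n, EC t i l * w l := by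
      intro i
      rw [hN, Matrix.mul_apply]
    have hr0k : ¬ ((r0 : Fin n) : ℕ) < k := by rw [hr0]; simp
    have hp0k : ((p0 : Fin n) : ℕ) < k := hk1
    have hupper : ∀ i : Fin n, (i : ℕ) < k → w i = if i = p0 then 1 else 0 := by
      intro i hik
      have h1 := hcol i
      have h2 : (∑ l : Fin n, EC t i l * w l) = w i :=
        S10.ee_mulVec_upper k (curve t) w hik
      rw [h2] at h1
      rw [← h1]
      show S10.Ee k (curve t') i p0 = _
      rw [S10.ee_apply_lt k (curve t') hik hp0k]
    show curve t' r0 p0 = curve t r0 p0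
    have e1 : EC t' r0 p0 = curve t' r0 p0 := S10.ee_apply_low k (curve t') hr0k hp0k
    rw [← e1, hcol r0, Finset.sum_eq_single p0]
    · rw [hupper p0 hp0k, if_pos rfl, mul_one]
      exact S10.ee_apply_low k (curve t) hr0k hp0k
    · intro l _ hl
      by_cases hlk : (l : ℕ) < k
      · rw [hupper l hlk, if_neg hl, mul_zero]
      · rw [show EC t r0 l = 0 from S10.ee_apply_col_ge k (curve t) r0 l hlk, zero_mul]
    · intro h; exact absurd (Finset.mem_univ p0) h
  -- the image of the good set is infinite
  have himage_sub : (fun t => Submodule.span (Matrix (Fin n) (Fin n) D)ᵐᵒᵖ {EC t}) '' good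
      ⊆ {I : Submodule (Matrix (Fin n) (Fin n) D)ᵐᵒᵖ (Matrix (Fin n) (Fin n) D) |
        Module.finrank Dᵐᵒᵖ (colSpan I) = k ∧
        ∀ g ∈ G, g ≠ 1 →
          ⇑g '' (I : Set (Matrix (Fin n) (Fin n) D)) ≠ (I : Set (Matrix (Fin n) (Fin n) D))} := by
    rintro I ⟨t, ht, rfl⟩
    exact hmem t ht
  have himg_inf :
      ((fun t => Submodule.span (Matrix (Fin n) (Fin n) D)ᵐᵒᵖ {EC t}) '' good).Infinite := by
    by_contra hninf
    rw [Set.not_infinite] at hninf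
    have hcover : good ⊆ ⋃ y ∈
        ((fun t => Submodule.span (Matrix (Fin n) (Fin n) D)ᵐᵒᵖ {EC t}) '' good),
        {t : ℚ | Submodule.span (Matrix (Fin n) (Fin n) D)ᵐᵒᵖ {EC t} = y} := by
      intro t ht
      exact Set.mem_biUnion (Set.mem_image_of_mem _ ht) rfl
    have hgoodfin : good.Finite := by
      refine Set.Finite.subset (Set.Finite.biUnion hninf ?_) hcover
      rintro y ⟨ty, _, rfl⟩
      refine Set.Finite.subset (hfiber (Fent ty)) ?_
      intro t ht
      exact hFent_inj ty t ht.symm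
    exact hgood_inf hgoodfin
  exact Set.Infinite.mono himage_sub himg_inf
end

section
/- Let r ≥ 1 be an integer and S₁, …, S_r be sets. For each i, let H_i be a subgroup of the group of bijections of S_i such that for every finite subgroup G_i of H_i the set {s ∈ S_i : λ(s) ≠ s for all λ ∈ G_i with λ ≠ id} is infinite. Let G be a finite subgroup of the group of bijections of the product ∏_{i=1}^r S_i such that for every g ∈ G there exist a permutation τ_g of {1, …, r} and bijections λ_{g,i} : S_{τ_g⁻¹(i)} → S_i with g(s₁, …, s_r) = (λ_{g,1}(s_{τ_g⁻¹(1)}), …, λ_{g,r}(s_{τ_g⁻¹(r)})) for all tuples, and such that λ_{g,i} ∈ H_i whenever τ_g(i) = i. Then the set F = {s ∈ ∏_{i=1}^r S_i : g(s) ≠ s for all g ∈ G with g ≠ id} is infinite. -/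
lemma exists_tuple_aux {r : ℕ} (S : Fin r → Type*) (D : ∀ i, Set (S i))
    (hD : ∀ i, (D i).Infinite)
    (C : Set (Σ i : Fin r, Σ j : Fin r, (S j ≃ S i))) (hCfin : C.Finite)
    (hC : ∀ c ∈ C, c.1 ≠ c.2.1) :
    ∃ s : ∀ i, S i, (∀ i, s i ∈ D i) ∧ ∀ c ∈ C, s c.1 ≠ c.2.2 (s c.2.1) := by
  have key : ∀ n : ℕ, ∃ f : ∀ i : Fin r, i.val < n → S i,
      (∀ i hi, f i hi ∈ D i) ∧
      ∀ c ∈ C, ∀ (hi : c.1.val < n) (hj : c.2.1.val < n),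
        f c.1 hi ≠ c.2.2 (f c.2.1 hj) := by
    intro n
    induction n with
    | zero =>
      exact ⟨fun i hi => absurd hi (Nat.not_lt_zero _),
        fun i hi => absurd hi (Nat.not_lt_zero _),
        fun c hc hi => absurd hi (Nat.not_lt_zero _)⟩
    | succ n ih =>
      obtain ⟨f, hf1, hf2⟩ := ih
      by_cases hn : n < r
      · set Bad : Set (S ⟨n, hn⟩) := ⋃ c ∈ C,
          ({v | ∃ (h : c.1 = (⟨n, hn⟩ : Fin r)) (hj : c.2.1.val < n),
              v = cast (congrArg S h) (c.2.2 (f c.2.1 hj))} ∪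
           {v | ∃ (h : c.2.1 = (⟨n, hn⟩ : Fin r)) (hi : c.1.val < n),
              v = cast (congrArg S h) (c.2.2.symm (f c.1 hi))}) with hBadDef
        have hBadFin : Bad.Finite := by
          refine Set.Finite.biUnion hCfin fun c hc => Set.Finite.union ?_ ?_
          · apply Set.Subsingleton.finite
            rintro a ⟨h, hj, rfl⟩ b ⟨h', hj', rfl⟩; rfl
          · apply Set.Subsingleton.finite
            rintro a ⟨h, hj, rfl⟩ b ⟨h', hj', rfl⟩; rfl
        obtain ⟨v, hv⟩ := ((hD ⟨n, hn⟩).diff hBadFin).nonempty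
        refine ⟨fun i h => if h' : i.val < n then f i h' else
            cast (congrArg S (Fin.ext (show n = i.val by omega) : (⟨n, hn⟩ : Fin r) = i)) v,
          ?_, ?_⟩
        · intro i hi
          dsimp only
          split_ifs with h'
          · exact hf1 i h'
          · obtain rfl : (⟨n, hn⟩ : Fin r) = i := Fin.ext (show n = i.val by omega)
            exact hv.1
        · rintro ⟨ci, cj, lam⟩ hc hi hj
          dsimp only at hi hj ⊢
          split_ifs with h1 h2 h2
          · exact hf2 _ hc h1 h2
          · -- ci chosen earlier, cj = new
            obtain rfl : (⟨n, hn⟩ : Fin r) = cj := Fin.ext (show n = cj.val by omega)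
            intro heq
            exact hv.2 (Set.mem_biUnion hc
              (Or.inr ⟨rfl, h1, (Equiv.eq_symm_apply _).mpr heq.symm⟩))
          · -- ci new, cj earlier
            obtain rfl : (⟨n, hn⟩ : Fin r) = ci := Fin.ext (show n = ci.val by omega)
            intro heq
            exact hv.2 (Set.mem_biUnion hc (Or.inl ⟨rfl, h2, heq⟩))
          · obtain rfl : (⟨n, hn⟩ : Fin r) = ci := Fin.ext (show n = ci.val by omega)
            obtain rfl : (⟨n, hn⟩ : Fin r) = cj := Fin.ext (show n = cj.val by omega)
            exact absurd rfl (hC _ hc)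
      · exact ⟨fun i h => f i (lt_of_lt_of_le i.isLt (by omega)),
          fun i hi => hf1 i _, fun c hc hi hj => hf2 c hc _ _⟩
  obtain ⟨f, hf1, hf2⟩ := key r
  exact ⟨fun i => f i i.isLt, fun i => hf1 i _, fun c hc => hf2 c hc _ _⟩

/-- Combinatorial lemma: given sets `S 0, …, S (r-1)` and subgroups `H i` of
the permutation groups of the `S i` such that for every finite subgroup `G i ≤ H i` the set of
points moved by every non-trivial element of `G i` is infinite, any finite subgroup `G` of the
permutations of `∏ i, S i` whose elements act by permuting the coordinates (coordinates fixed by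
the index permutation being acted on by members of the corresponding `H i`) has an infinite set
of tuples moved by every non-trivial element of `G`. -/
theorem combinatorial_lemma
    {r : ℕ} (hr : 1 ≤ r) (S : Fin r → Type*)
    (H : ∀ i, Subgroup (Equiv.Perm (S i)))
    (hH : ∀ i, ∀ Gi : Subgroup (Equiv.Perm (S i)), Gi ≤ H i →
      (Gi : Set (Equiv.Perm (S i))).Finite →
      {s : S i | ∀ lam ∈ Gi, lam ≠ 1 → lam s ≠ s}.Infinite)
    (G : Subgroup (Equiv.Perm (∀ i, S i)))
    (hGfin : (G : Set (Equiv.Perm (∀ i, S i))).Finite)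
    (hG : ∀ g ∈ G, ∃ τ : Equiv.Perm (Fin r), ∃ lam : ∀ i, S (τ.symm i) ≃ S i,
      (∀ s : ∀ i, S i, g s = fun i => lam i (s (τ.symm i))) ∧
      (∀ i, τ i = i → ∃ μ ∈ H i, ∀ s : ∀ j, S j, g s i = μ (s i))) :
    {s : ∀ i, S i | ∀ g ∈ G, g ≠ 1 → g s ≠ s}.Infinite := by
  classical
  -- each S i is infinite
  have huniv : ∀ i, (Set.univ : Set (S i)).Infinite := by
    intro i
    have h1 : ((⊥ : Subgroup (Equiv.Perm (S i))) : Set (Equiv.Perm (S i))).Finite := by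
      simp only [Subgroup.coe_bot]
      exact Set.finite_singleton _
    have h2 := hH i ⊥ bot_le h1
    exact h2.mono (Set.subset_univ _)
  have base : ∀ j, S j := fun j => (huniv j).nonempty.choose
  have hpair : ∀ j (x : S j), ∃ y : S j, y ≠ x := by
    intro j x
    obtain ⟨y, hy⟩ := ((huniv j).diff (Set.finite_singleton x)).nonempty
    exact ⟨y, by simpa using hy.2⟩
  choose τg lamg hval hfix using hG
  -- the subgroup of permutations of S i realized coordinatewise by elements of G
  let M : ∀ i, Subgroup (Equiv.Perm (S i)) := fun i =>
  { carrier := {μ | ∃ g ∈ G, ∀ s : ∀ j, S j, g s i = μ (s i)}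
    one_mem' := ⟨1, one_mem G, fun s => rfl⟩
    mul_mem' := by
      rintro a b ⟨g, hg, hga⟩ ⟨g', hg', hgb⟩
      refine ⟨g * g', mul_mem hg hg', fun s => ?_⟩
      have h1 := hga (g' s)
      have h2 := hgb s
      simp only [Equiv.Perm.mul_apply]
      rw [h1, h2]
    inv_mem' := by
      rintro a ⟨g, hg, hga⟩
      refine ⟨g⁻¹, inv_mem hg, fun s => ?_⟩
      have h2 : s i = a ((g⁻¹ s) i) := by
        have := hga (g⁻¹ s)
        rwa [← Equiv.Perm.mul_apply, mul_inv_cancel, Equiv.Perm.one_apply] at this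
      rw [h2]
      simp }
  have hMmem : ∀ i (μ : Equiv.Perm (S i)),
      μ ∈ M i ↔ ∃ g ∈ G, ∀ s : ∀ j, S j, g s i = μ (s i) := fun i μ => Iff.rfl
  -- determinacy
  have hdet : ∀ i (μ μ' : Equiv.Perm (S i)) (g : Equiv.Perm (∀ j, S j)),
      (∀ s : ∀ j, S j, g s i = μ (s i)) → (∀ s : ∀ j, S j, g s i = μ' (s i)) → μ = μ' := by
    intro i μ μ' g h1 h2
    ext x
    have e1 := h1 (Function.update base i x)
    have e2 := h2 (Function.update base i x)
    rw [Function.update_self] at e1 e2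
    rw [← e1, ← e2]
  -- M i ≤ H i
  have hMH : ∀ i, M i ≤ H i := by
    intro i μ hμ
    obtain ⟨g, hg, hgμ⟩ := hμ
    by_cases hτ : τg g hg i = i
    · obtain ⟨μ', hμ'H, hμ'⟩ := hfix g hg i hτ
      rwa [hdet i μ μ' g hgμ hμ']
    · exfalso
      have hji : (τg g hg).symm i ≠ i := fun h => hτ (by conv_lhs => rw [← h, Equiv.apply_symm_apply])
      have hcross : ∀ s : ∀ j, S j,
          lamg g hg i (s ((τg g hg).symm i)) = μ (s i) := by
        intro s
        rw [← congrFun (hval g hg s) i]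
        exact hgμ s
      obtain ⟨y, hy⟩ := hpair ((τg g hg).symm i) (base ((τg g hg).symm i))
      have e1 := hcross (Function.update base ((τg g hg).symm i) y)
      have e2 := hcross base
      rw [Function.update_self, Function.update_of_ne hji.symm] at e1
      rw [← e2] at e1
      exact hy ((lamg g hg i).injective e1)
  -- M i is finite
  have hMfin : ∀ i, ((M i : Set (Equiv.Perm (S i)))).Finite := by
    intro i
    have hdep := hGfin.dependent_image
      (F := fun g (_ : g ∈ (G : Set (Equiv.Perm (∀ j, S j)))) =>
        if h : ∃ μ0 : Equiv.Perm (S i), ∀ s : ∀ j, S j, g s i = μ0 (s i)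
        then h.choose else (1 : Equiv.Perm (S i)))
    refine hdep.subset ?_
    rintro μ ⟨g, hg, hgμ⟩
    have hex : ∃ μ0 : Equiv.Perm (S i), ∀ s : ∀ j, S j, g s i = μ0 (s i) := ⟨μ, hgμ⟩
    refine ⟨g, hg, ?_⟩
    rw [dif_pos hex]
    exact hdet i hex.choose μ g hex.choose_spec hgμ
  -- the infinite free sets
  have hD : ∀ i, {x : S i | ∀ μ ∈ M i, μ ≠ 1 → μ x ≠ x}.Infinite :=
    fun i => hH i (M i) (hMH i) (hMfin i)
  set D : ∀ i, Set (S i) := fun i => {x : S i | ∀ μ ∈ M i, μ ≠ 1 → μ x ≠ x} with hDdef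
  -- the constraint set
  haveI hfinsub : Finite {g : Equiv.Perm (∀ j, S j) // g ∈ G} := hGfin.to_subtype
  set C : Set (Σ i : Fin r, Σ j : Fin r, (S j ≃ S i)) :=
    (fun p : {q : {g : Equiv.Perm (∀ j, S j) // g ∈ G} × Fin r //
        τg q.1.1 q.1.2 q.2 ≠ q.2} =>
      (⟨p.1.2, (τg p.1.1.1 p.1.1.2).symm p.1.2, lamg p.1.1.1 p.1.1.2 p.1.2⟩ :
        Σ i : Fin r, Σ j : Fin r, (S j ≃ S i))) '' Set.univ
    with hCdef
  have hCfin : C.Finite := Set.finite_univ.image _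
  have hC : ∀ c ∈ C, c.1 ≠ c.2.1 := by
    rintro c ⟨p, -, rfl⟩
    dsimp only
    intro h
    exact p.2 ((congrArg _ h).trans (Equiv.apply_symm_apply _ _))
  -- conclude
  by_contra hfin
  rw [Set.not_infinite] at hfin
  set A : Set (∀ i, S i) := {s : ∀ i, S i | ∀ g ∈ G, g ≠ 1 → g s ≠ s} with hA
  have hD' : ∀ i, (D i \ ((fun t : ∀ j, S j => t i) '' A)).Infinite :=
    fun i => (hD i).diff (hfin.image _)
  obtain ⟨s, hsD, hsC⟩ := exists_tuple_aux S _ hD' C hCfin hC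
  have hsA : s ∈ A := by
    intro g hg hgne heq
    by_cases hτ : ∀ i, τg g hg i = i
    · choose μ hμH hμ using fun i => hfix g hg i (hτ i)
      have hμM : ∀ i, μ i ∈ M i := fun i => ⟨g, hg, hμ i⟩
      have hone : ∃ i, μ i ≠ 1 := by
        by_contra hall
        push_neg at hall
        apply hgne
        refine Equiv.ext fun t => funext fun i => ?_
        rw [hμ i t, hall i]
        rfl
      obtain ⟨i, hi⟩ := hone
      have : g s i = s i := congrFun heq i
      rw [hμ i s] at this
      exact (hsD i).1 (μ i) (hμM i) hi this
    · push_neg at hτ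
      obtain ⟨i, hi⟩ := hτ
      have hcmem : (⟨i, (τg g hg).symm i, lamg g hg i⟩ :
          Σ i : Fin r, Σ j : Fin r, (S j ≃ S i)) ∈ C :=
        ⟨⟨⟨⟨g, hg⟩, i⟩, hi⟩, Set.mem_univ _, rfl⟩
      have := hsC _ hcmem
      apply this
      calc s i = g s i := (congrFun heq i).symm
        _ = lamg g hg i (s ((τg g hg).symm i)) := congrFun (hval g hg s) i
  have hs0 : s ⟨0, hr⟩ ∉ (fun t : ∀ j, S j => t ⟨0, hr⟩) '' A := (hsD ⟨0, hr⟩).2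
  exact hs0 ⟨s, hsA, rfl⟩
end
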